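/- arXiv:2208.00240 — 8 statements merged into one kernel-verified Lean document; each statement's English description precedes it below -/
import Mathlib

section
/- Let L be a commutative ring, D ∈ L, m ≥ 1, E = L[x]/(x^m − D), and a ∈ L. Then for all integers i, j with 0 ≤ i, j ≤ m − 1: Tr_{E/L}(a·x^i·x^j) = m·a if i = j = 0; Tr_{E/L}(a·x^i·x^j) = m·a·D if i + j = m; and Tr_{E/L}(a·x^i·x^j) = 0 in all other cases. -/
open Polynomial

section aux

variable (L : Type*) [CommRing L] [Nontrivial L] (D : L) (m : ℕ)

lemma root_pow_self (hm : 1 ≤ m) :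
    AdjoinRoot.root (X ^ m - C D) ^ m = algebraMap L (AdjoinRoot (X ^ m - C D)) D := by
  have h := AdjoinRoot.mk_self (f := X ^ m - C D)
  rw [map_sub, map_pow, AdjoinRoot.mk_X, sub_eq_zero] at h
  rw [h, AdjoinRoot.algebraMap_eq, AdjoinRoot.of, RingHom.comp_apply]

lemma trace_root_pow_zero (hm : 1 ≤ m) (s : ℕ) (hs1 : 1 ≤ s) (hs2 : s < m) :
    Algebra.trace L (AdjoinRoot (X ^ m - C D)) (AdjoinRoot.root (X ^ m - C D) ^ s) = 0 := by
  have hf : (X ^ m - C D).Monic := monic_X_pow_sub_C D (by omega)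
  set pb := AdjoinRoot.powerBasis' hf with hpb
  have hdim : pb.dim = m := by
    simp [hpb, natDegree_X_pow_sub_C]
  have hgen : pb.gen = AdjoinRoot.root (X ^ m - C D) := rfl
  rw [Algebra.trace_eq_matrix_trace pb.basis, Matrix.trace]
  refine Finset.sum_eq_zero fun t _ => ?_
  rw [Matrix.diag_apply, Algebra.leftMulMatrix_eq_repr_mul, PowerBasis.coe_basis, ← hgen,
    ← pow_add]
  have ht : (t : ℕ) < m := by have := t.isLt; omega
  by_cases hu : s + (t : ℕ) < m
  · have : pb.gen ^ (s + (t : ℕ)) = pb.basis ⟨s + t, by omega⟩ := by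
      rw [PowerBasis.coe_basis]
    rw [this, Module.Basis.repr_self_apply, if_neg (by simp [Fin.ext_iff]; omega)]
  · push_neg at hu
    have h1 : s + (t : ℕ) - m < m := by omega
    have : pb.gen ^ (s + (t : ℕ)) = D • pb.basis ⟨s + t - m, by omega⟩ := by
      rw [PowerBasis.coe_basis]
      have heq : s + (t : ℕ) = m + (s + t - m) := by omega
      conv_lhs => rw [heq]
      rw [pow_add, hgen, root_pow_self L D m hm, Algebra.smul_def]
    rw [this, map_smul, Finsupp.smul_apply, Module.Basis.repr_self_apply,
      if_neg (by simp [Fin.ext_iff]; omega), smul_zero]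

lemma trace_one' (hm : 1 ≤ m) :
    Algebra.trace L (AdjoinRoot (X ^ m - C D)) 1 = (m : L) := by
  have hf : (X ^ m - C D).Monic := monic_X_pow_sub_C D (by omega)
  set pb := AdjoinRoot.powerBasis' hf
  have hdim : pb.dim = m := by simp [pb, natDegree_X_pow_sub_C]
  have := Algebra.trace_algebraMap_of_basis pb.basis (1 : L)
  simpa [hdim] using this

end aux

/-- In `E = L[x]/(x^m − D)`, for `0 ≤ i, j ≤ m − 1` the trace of `a·x^i·x^j` equals `m·a`
if `i = j = 0`, equals `m·a·D` if `i + j = m`, and equals `0` otherwise. -/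
theorem trace_adjoinRoot_gram (L : Type*) [CommRing L] (D : L) (m : ℕ) (hm : 1 ≤ m)
    (a : L) (i j : ℕ) (hi : i ≤ m - 1) (hj : j ≤ m - 1) :
    Algebra.trace L (AdjoinRoot (X ^ m - C D))
      (algebraMap L (AdjoinRoot (X ^ m - C D)) a *
        AdjoinRoot.root (X ^ m - C D) ^ i * AdjoinRoot.root (X ^ m - C D) ^ j) =
    if i = 0 ∧ j = 0 then (m : L) * a
    else if i + j = m then (m : L) * a * D
    else 0 := by
  rcases subsingleton_or_nontrivial L with hL | hL
  · exact Subsingleton.elim _ _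
  set E := AdjoinRoot (X ^ m - C D)
  set x := AdjoinRoot.root (X ^ m - C D)
  have key : algebraMap L E a * x ^ i * x ^ j = a • (x ^ (i + j)) := by
    rw [mul_assoc, ← pow_add, Algebra.smul_def]
  rw [key, map_smul, smul_eq_mul]
  rcases Nat.lt_trichotomy (i + j) m with h | h | h
  · rcases Nat.eq_zero_or_pos (i + j) with h0 | h0
    · have hij : i = 0 ∧ j = 0 := by omega
      rw [if_pos hij, h0, pow_zero, trace_one' L D m hm]; ring
    · rw [if_neg (by omega), if_neg (by omega),
        trace_root_pow_zero L D m hm (i + j) h0 h, mul_zero]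
  · rw [if_neg (by omega), if_pos h, h, root_pow_self L D m hm]
    have hf : (X ^ m - C D).Monic := monic_X_pow_sub_C D (by omega)
    have := Algebra.trace_algebraMap_of_basis (AdjoinRoot.powerBasis' hf).basis D
    rw [this]
    simp [natDegree_X_pow_sub_C, nsmul_eq_mul]
    ring
  · -- i + j > m, so x^(i+j) = D • x^(i+j-m) with 1 ≤ i+j-m < m
    have h1 : 1 ≤ i + j - m := by omega
    have h2 : i + j - m < m := by omega
    have : x ^ (i + j) = D • x ^ (i + j - m) := by
      have heq : i + j = m + (i + j - m) := by omega
      rw [heq, pow_add, root_pow_self L D m hm, Algebra.smul_def,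
        Nat.add_sub_cancel_left]
    rw [if_neg (by omega), if_neg (by omega), this, map_smul, smul_eq_mul,
      trace_root_pow_zero L D m hm _ h1 h2, mul_zero, mul_zero]
end

section
/- Let L be a field whose characteristic does not divide 2m, let m ≥ 1 be an odd integer, let D, a ∈ L be nonzero, and let E = L[x]/(x^m − D). Then the symmetric L-bilinear form on E given by (u, v) ↦ Tr_{E/L}(m·a·u·v) is isometric to the diagonal form ⟨a⟩ ⊥ ((m−1)/2)·h, i.e. to ⟨a, 1, −1, 1, −1, …, 1, −1⟩ with (m−1)/2 hyperbolic pairs. -/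
open Polynomial

section Aux

variable {L : Type*} [Field L]

lemma aux_root_pow_m (m : ℕ) (D : L) :
    AdjoinRoot.root (X ^ m - C D : L[X]) ^ m
      = algebraMap L (AdjoinRoot (X ^ m - C D : L[X])) D := by
  have h : (AdjoinRoot.mk (X ^ m - C D : L[X])) (X ^ m - C D) = 0 := AdjoinRoot.mk_self
  rw [map_sub, map_pow, AdjoinRoot.mk_X, AdjoinRoot.mk_C, sub_eq_zero] at h
  simpa [AdjoinRoot.algebraMap_eq] using h

lemma aux_trace_small (m : ℕ) (hm : m ≠ 0) (D : L) (t : ℕ) (ht : t < m) :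
    Algebra.trace L (AdjoinRoot (X ^ m - C D : L[X]))
        (AdjoinRoot.root (X ^ m - C D : L[X]) ^ t)
      = if t = 0 then (m : L) else 0 := by
  classical
  have hmonic : (X ^ m - C D : L[X]).Monic := monic_X_pow_sub_C D hm
  have hf0 : (X ^ m - C D : L[X]) ≠ 0 := hmonic.ne_zero
  set pb := AdjoinRoot.powerBasis hf0 with hpb
  have hdim : pb.dim = m := by
    rw [hpb, AdjoinRoot.powerBasis_dim, natDegree_X_pow_sub_C]
  have hgen : pb.gen = AdjoinRoot.root (X ^ m - C D : L[X]) := by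
    rw [hpb, AdjoinRoot.powerBasis_gen]
  rw [Algebra.trace_eq_matrix_trace pb.basis, Matrix.trace]
  -- repr of gen ^ s for s < m
  have hrepr : ∀ s : ℕ, (hs : s < pb.dim) → ∀ i : Fin pb.dim,
      pb.basis.repr (pb.gen ^ s) i = if (i : ℕ) = s then 1 else 0 := by
    intro s hs i
    have : pb.gen ^ s = pb.basis ⟨s, hs⟩ := (pb.basis_eq_pow ⟨s, hs⟩).symm
    rw [this, pb.basis.repr_self, Finsupp.single_apply]
    simp [Fin.ext_iff, eq_comm]
  rcases Nat.eq_zero_or_pos t with rfl | htpos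
  · simp only [if_pos rfl]
    have : ∀ i : Fin pb.dim, Algebra.leftMulMatrix pb.basis (AdjoinRoot.root _ ^ 0) i i = 1 := by
      intro i
      rw [Algebra.leftMulMatrix_eq_repr_mul, pow_zero, one_mul, pb.basis.repr_self,
        Finsupp.single_apply]
      simp
    rw [Finset.sum_congr rfl fun i _ => (by exact this i : _)]
    simp [hdim]
  · rw [if_neg (by omega)]
    refine Finset.sum_eq_zero fun i _ => ?_
    rw [Matrix.diag_apply, Algebra.leftMulMatrix_eq_repr_mul, pb.basis_eq_pow, ← hgen, ← pow_add]
    have hi : (i : ℕ) < m := by have h := i.isLt; omega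
    by_cases hc : t + (i : ℕ) < m
    · rw [hrepr _ (by omega)]
      rw [if_neg (by omega)]
    · have hrootm : pb.gen ^ m = algebraMap L (AdjoinRoot (X ^ m - C D : L[X])) D := by
        rw [hgen]; exact aux_root_pow_m m D
      have h1 : pb.gen ^ (t + (i : ℕ)) = D • pb.gen ^ (t + (i : ℕ) - m) := by
        rw [Algebra.smul_def, ← hrootm, ← pow_add]
        congr 1
        omega
      rw [h1, map_smul]
      simp only [Finsupp.coe_smul, Pi.smul_apply, smul_eq_mul]
      rw [hrepr _ (by omega), if_neg (by omega), mul_zero]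

lemma aux_trace_all (m : ℕ) (hm : m ≠ 0) (D : L) (t : ℕ) (ht : t < 2 * m) :
    Algebra.trace L (AdjoinRoot (X ^ m - C D : L[X]))
        (AdjoinRoot.root (X ^ m - C D : L[X]) ^ t)
      = if t = 0 then (m : L) else if t = m then (m : L) * D else 0 := by
  by_cases h : t < m
  · rw [aux_trace_small m hm D t h]
    rcases Nat.eq_zero_or_pos t with rfl | h'
    · simp
    · rw [if_neg (by omega), if_neg (by omega), if_neg (by omega)]
  · have h1 : t = m + (t - m) := by omega
    rw [h1, pow_add, aux_root_pow_m, ← Algebra.smul_def, map_smul, smul_eq_mul,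
      aux_trace_small m hm D (t - m) (by omega)]
    by_cases h2 : t - m = 0
    · rw [if_pos h2, if_neg (by omega), if_pos (by omega)]
      ring
    · rw [if_neg h2, if_neg (by omega), if_neg (by omega), mul_zero]

end Aux

/-- For `m` odd, `char L ∤ 2m`, and `D, a ∈ Lˣ`, the bilinear form
`(u, v) ↦ Tr_{E/L}(m·a·u·v)` on `E = L[x]/(x^m − D)` is isometric to
`⟨a⟩ ⊥ ((m−1)/2)·h`, i.e. to the diagonal form `⟨a, 1, −1, …, 1, −1⟩`. -/
theorem trace_form_scaled_odd (L : Type*) [Field L] (m : ℕ) (hm : 1 ≤ m) (hodd : Odd m)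
    (hchar : ((2 * m : ℕ) : L) ≠ 0) (D a : L) (hD : D ≠ 0) (ha : a ≠ 0) :
    ∃ e : (Fin m → L) ≃ₗ[L] AdjoinRoot (X ^ m - C D),
      ∀ u v : Fin m → L,
        Algebra.trace L (AdjoinRoot (X ^ m - C D))
            ((m : AdjoinRoot (X ^ m - C D)) *
              algebraMap L (AdjoinRoot (X ^ m - C D)) a * e u * e v) =
        ∑ i : Fin m,
          (if (i : ℕ) = 0 then a else if (i : ℕ) % 2 = 1 then 1 else -1) * u i * v i := by
  classical
  have hm0 : m ≠ 0 := by omega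
  have h2m : (2 : L) * (m : L) ≠ 0 := by push_cast at hchar; exact_mod_cast hchar
  have h2 : (2 : L) ≠ 0 := fun h => h2m (by rw [h, zero_mul])
  have hmL : (m : L) ≠ 0 := fun h => h2m (by rw [h, mul_zero])
  obtain ⟨k, hk⟩ := hodd
  set E := AdjoinRoot (X ^ m - C D : L[X]) with hE
  set r : E := AdjoinRoot.root (X ^ m - C D : L[X]) with hr
  have hβ0 : 2 * (m : L) ^ 2 * a * D ≠ 0 := by
    refine mul_ne_zero (mul_ne_zero (mul_ne_zero h2 (pow_ne_zero _ hmL)) ha) hD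
  set β : L := (2 * (m : L) ^ 2 * a * D)⁻¹ with hβ
  set p : Fin m → ℕ := fun i => ((i : ℕ) + 1) / 2 with hp
  set s : Fin m → L := fun i => if (i : ℕ) % 2 = 1 then (1 : L) else -1 with hs
  set w : Fin m → E := fun i =>
    if (i : ℕ) = 0 then ((m : L)⁻¹) • 1 else r ^ p i + (s i * β) • r ^ (m - p i) with hw
  set G : Fin m → L := fun i => if (i : ℕ) = 0 then a else s i with hG
  have hτ : ∀ t : ℕ, t < 2 * m →
      Algebra.trace L E (r ^ t) = if t = 0 then (m : L) else if t = m then (m : L) * D else 0 :=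
    fun t ht => aux_trace_all m hm0 D t ht
  have hTr : ∀ z : E, Algebra.trace L E ((m : E) * algebraMap L E a * z)
      = (m : L) * a * Algebra.trace L E z := by
    intro z
    have h1 : (m : E) * algebraMap L E a * z = ((m : L) * a) • z := by
      rw [Algebra.smul_def, map_mul, map_natCast]
    rw [h1, map_smul, smul_eq_mul]
  -- bounds on p
  have hpbound : ∀ i : Fin m, (i : ℕ) ≠ 0 → 1 ≤ p i ∧ p i ≤ k := by
    intro i hi
    have := i.isLt
    simp only [hp]
    omega
  -- main Gram computation
  have hB : ∀ i j : Fin m,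
      Algebra.trace L E ((m : E) * algebraMap L E a * (w i * w j))
        = if i = j then G i else 0 := by
    intro i j
    rw [hTr]
    by_cases hi0 : (i : ℕ) = 0 <;> by_cases hj0 : (j : ℕ) = 0
    · -- both zero: i = j
      have hij : i = j := Fin.ext (by omega)
      have hprod : w i * w j = ((m : L)⁻¹ * (m : L)⁻¹) • r ^ 0 := by
        simp only [hw, if_pos hi0, if_pos hj0, pow_zero]
        rw [smul_mul_smul_comm, one_mul]
      rw [hprod, map_smul, hτ 0 (by omega), if_pos rfl, if_pos hij, hG]
      simp only [if_pos hi0, smul_eq_mul]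
      field_simp
    · -- i = 0, j ≠ 0
      have hij : i ≠ j := fun h => hj0 (h ▸ hi0)
      have hpj := hpbound j hj0
      have hprod : w i * w j = (m : L)⁻¹ • (r ^ p j + (s j * β) • r ^ (m - p j)) := by
        simp only [hw, if_pos hi0, if_neg hj0]
        rw [smul_mul_assoc, one_mul]
      rw [hprod, map_smul, map_add, map_smul, hτ (p j) (by omega), hτ (m - p j) (by omega)]
      rw [if_neg (by omega), if_neg (by omega), if_neg (by omega), if_neg (by omega),
        if_neg hij]
      simp
    · -- i ≠ 0, j = 0
      have hij : i ≠ j := fun h => hi0 (h.symm ▸ hj0)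
      have hpi := hpbound i hi0
      have hprod : w i * w j = (m : L)⁻¹ • (r ^ p i + (s i * β) • r ^ (m - p i)) := by
        simp only [hw, if_neg hi0, if_pos hj0]
        rw [mul_smul_comm, mul_one]
      rw [hprod, map_smul, map_add, map_smul, hτ (p i) (by omega), hτ (m - p i) (by omega)]
      rw [if_neg (by omega), if_neg (by omega), if_neg (by omega), if_neg (by omega),
        if_neg hij]
      simp
    · -- both nonzero
      have hpi := hpbound i hi0
      have hpj := hpbound j hj0
      have hprod : w i * w j = r ^ (p i + p j) + (s j * β) • r ^ (p i + (m - p j))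
          + (s i * β) • r ^ ((m - p i) + p j)
          + ((s i * β) * (s j * β)) • r ^ ((m - p i) + (m - p j)) := by
        simp only [hw, if_neg hi0, if_neg hj0]
        simp only [Algebra.smul_def, map_mul]
        ring
      have t1 : Algebra.trace L E (r ^ (p i + p j)) = 0 := by
        rw [hτ _ (by omega), if_neg (by omega), if_neg (by omega)]
      have t4 : Algebra.trace L E (r ^ ((m - p i) + (m - p j))) = 0 := by
        rw [hτ _ (by omega), if_neg (by omega), if_neg (by omega)]
      have t2 : Algebra.trace L E (r ^ (p i + (m - p j)))
          = if p i = p j then (m : L) * D else 0 := by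
        rw [hτ _ (by omega)]
        by_cases hpp : p i = p j
        · rw [if_neg (by omega), if_pos (by omega), if_pos hpp]
        · rw [if_neg (by omega), if_neg (by omega), if_neg hpp]
      have t3 : Algebra.trace L E (r ^ ((m - p i) + p j))
          = if p i = p j then (m : L) * D else 0 := by
        rw [hτ _ (by omega)]
        by_cases hpp : p i = p j
        · rw [if_neg (by omega), if_pos (by omega), if_pos hpp]
        · rw [if_neg (by omega), if_neg (by omega), if_neg hpp]
      rw [hprod, map_add, map_add, map_add, map_smul, map_smul, map_smul, t1, t2, t3, t4]
      by_cases hij : i = j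
      · subst hij
        rw [if_pos rfl, if_pos rfl, hG]
        simp only [if_neg hi0, smul_eq_mul, smul_zero]
        have hone : (2 * (m : L) ^ 2 * a * D) * β = 1 := mul_inv_cancel₀ hβ0
        linear_combination (s i) * hone
      · rw [if_neg hij]
        by_cases hpp : p i = p j
        · have hiv := i.isLt
          have hjv := j.isLt
          have hijv : (i : ℕ) ≠ (j : ℕ) := fun h => hij (Fin.ext h)
          have hpar : (i : ℕ) % 2 ≠ (j : ℕ) % 2 := by
            simp only [hp] at hpp; omega
          rw [if_pos hpp]
          by_cases hi1 : (i : ℕ) % 2 = 1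
          · have hj1 : ¬((j : ℕ) % 2 = 1) := by omega
            simp only [hs, if_pos hi1, if_neg hj1, smul_eq_mul, smul_zero]
            ring
          · have hj1 : (j : ℕ) % 2 = 1 := by omega
            simp only [hs, if_neg hi1, if_pos hj1, smul_eq_mul, smul_zero]
            ring
        · rw [if_neg hpp]
          simp
  -- G is nonzero
  have hG0 : ∀ i : Fin m, G i ≠ 0 := by
    intro i
    simp only [hG, hs]
    by_cases hi0 : (i : ℕ) = 0
    · simp [hi0, ha]
    · by_cases hi1 : (i : ℕ) % 2 = 1 <;> simp [hi0, hi1]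
  -- linear independence
  have hli : LinearIndependent L w := by
    rw [Fintype.linearIndependent_iff]
    intro c hc j
    have h0 : Algebra.trace L E ((m : E) * algebraMap L E a * (w j * (∑ i, c i • w i))) = 0 := by
      rw [hc]; simp
    have hrw : (m : E) * algebraMap L E a * (w j * (∑ i, c i • w i))
        = ∑ i, c i • ((m : E) * algebraMap L E a * (w j * w i)) := by
      rw [Finset.mul_sum, Finset.mul_sum]
      refine Finset.sum_congr rfl fun i _ => ?_
      rw [mul_smul_comm, mul_smul_comm]
    rw [hrw, map_sum] at h0
    simp only [map_smul, hB, smul_eq_mul] at h0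
    rw [Finset.sum_eq_single j (fun i _ hne => by rw [if_neg (fun h => hne h.symm), mul_zero])
      (fun h => absurd (Finset.mem_univ j) h)] at h0
    rw [if_pos rfl] at h0
    exact (mul_eq_zero.mp h0).resolve_right (hG0 j)
  haveI : Nonempty (Fin m) := ⟨⟨0, by omega⟩⟩
  have hcard : Fintype.card (Fin m) = Module.finrank L E := by
    have hmonic : (X ^ m - C D : L[X]).Monic := monic_X_pow_sub_C D hm0
    have hf0 : (X ^ m - C D : L[X]) ≠ 0 := hmonic.ne_zero
    rw [Fintype.card_fin, (AdjoinRoot.powerBasis hf0).finrank, AdjoinRoot.powerBasis_dim,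
      natDegree_X_pow_sub_C]
  set b := basisOfLinearIndependentOfCardEqFinrank hli hcard with hb
  have hbw : ∀ i, b i = w i := fun i =>
    congrFun (coe_basisOfLinearIndependentOfCardEqFinrank hli hcard) i
  refine ⟨b.equivFun.symm, ?_⟩
  intro u v
  rw [Module.Basis.equivFun_symm_apply, Module.Basis.equivFun_symm_apply]
  simp only [hbw]
  have hexp : (m : E) * algebraMap L E a * (∑ i, u i • w i) * (∑ j, v j • w j)
      = ∑ i, ∑ j, (u i * v j) • ((m : E) * algebraMap L E a * (w i * w j)) := by
    rw [mul_assoc ((m : E) * algebraMap L E a), Finset.sum_mul_sum, Finset.mul_sum]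
    refine Finset.sum_congr rfl fun i _ => ?_
    rw [Finset.mul_sum]
    refine Finset.sum_congr rfl fun j _ => ?_
    rw [smul_mul_smul_comm, mul_smul_comm]
  rw [hexp, map_sum]
  refine Finset.sum_congr rfl fun i _ => ?_
  rw [map_sum]
  simp only [map_smul, hB, smul_eq_mul]
  rw [Finset.sum_eq_single i (fun j _ hne => by erw [hB, if_neg (fun h => hne h.symm)]; ring)
    (fun h => absurd (Finset.mem_univ i) h)]
  erw [hB]
  rw [if_pos rfl]
  simp only [hG, hs]
  by_cases hi0 : (i : ℕ) = 0
  · simp only [if_pos hi0]; ring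
  · simp only [if_neg hi0]
    by_cases hi1 : (i : ℕ) % 2 = 1
    · simp only [if_pos hi1]; ring
    · simp only [if_neg hi1]; ring
end

section
/- Let L be a field whose characteristic does not divide 2m, let m ≥ 2 be an even integer, let D, a ∈ L be nonzero, and let E = L[x]/(x^m − D). Then the symmetric L-bilinear form on E given by (u, v) ↦ Tr_{E/L}(m·a·u·v) is isometric to ⟨a⟩ ⊥ ⟨a·D⟩ ⊥ ((m−2)/2)·h. -/
open Polynomial

private lemma traceRootPow {L : Type*} [Field L] {m : ℕ} (hm : 0 < m) (D : L) (k : ℕ)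
    (hk : k < 2 * m) :
    Algebra.trace L (AdjoinRoot (X ^ m - C D)) (AdjoinRoot.root (X ^ m - C D) ^ k) =
      if k = 0 then (m : L) else if k = m then (m : L) * D else 0 := by
  have hmon : (X ^ m - C D).Monic := monic_X_pow_sub_C D hm.ne'
  set pb := AdjoinRoot.powerBasis' hmon with hpb
  have hdim : pb.dim = m := by
    simp [hpb, AdjoinRoot.powerBasis'_dim, natDegree_X_pow_sub_C]
  have hrootpow : ∀ n : ℕ, AdjoinRoot.root (X ^ m - C D) ^ n
      = D ^ (n / m) • AdjoinRoot.root (X ^ m - C D) ^ (n % m) := by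
    intro n
    conv_lhs => rw [← Nat.div_add_mod n m]
    rw [pow_add, pow_mul, root_X_pow_sub_C_pow, ← map_pow, Algebra.smul_def,
      AdjoinRoot.algebraMap_eq]
  rw [Algebra.trace_eq_matrix_trace pb.basis, Matrix.trace]
  have hi' : ∀ i : Fin pb.dim, (i : ℕ) < m := fun i => by have := i.isLt; omega
  have hterm : ∀ i : Fin pb.dim,
      (Algebra.leftMulMatrix pb.basis (AdjoinRoot.root (X ^ m - C D) ^ k)).diag i
        = if (k + (i : ℕ)) % m = i then D ^ ((k + (i : ℕ)) / m) else 0 := by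
    intro i
    rw [Matrix.diag_apply, Algebra.leftMulMatrix_eq_repr_mul]
    have hgen : pb.gen = AdjoinRoot.root (X ^ m - C D) := rfl
    rw [pb.basis_eq_pow i, hgen, ← pow_add, hrootpow, map_smul]
    have hlt : (k + (i : ℕ)) % m < pb.dim := by have := Nat.mod_lt (k + (i : ℕ)) hm; omega
    have hb2 : AdjoinRoot.root (X ^ m - C D) ^ ((k + (i : ℕ)) % m)
        = pb.basis ⟨(k + (i : ℕ)) % m, hlt⟩ := by rw [pb.basis_eq_pow, hgen]
    rw [hb2, pb.basis.repr_self, Finsupp.smul_single, smul_eq_mul, mul_one,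
      Finsupp.single_apply]
    simp [Fin.ext_iff]
  rw [Finset.sum_congr rfl (fun i _ => hterm i)]
  by_cases hk0 : k = 0
  · subst hk0
    rw [if_pos rfl]
    rw [Finset.sum_congr rfl (fun i _ => by
      rw [zero_add, Nat.mod_eq_of_lt (hi' i), if_pos rfl, Nat.div_eq_of_lt (hi' i), pow_zero])]
    simp [hdim]
  by_cases hkm : k = m
  · rw [if_neg hk0, if_pos hkm]
    rw [Finset.sum_congr rfl (fun i _ => by
      rw [hkm, Nat.add_comm m (i : ℕ), Nat.add_mod_right, Nat.add_div_right _ hm,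
        Nat.mod_eq_of_lt (hi' i), if_pos rfl, Nat.div_eq_of_lt (hi' i), pow_succ, pow_zero,
        one_mul])]
    simp [hdim, mul_comm]
  · rw [if_neg hk0, if_neg hkm]
    rw [Finset.sum_congr rfl (fun i _ => if_neg (by
        have h1 := Nat.div_add_mod (k + (i : ℕ)) m
        have h2 : (k + (i : ℕ)) % m < m := Nat.mod_lt _ hm
        have h3 : (k + (i : ℕ)) / m < 3 := Nat.div_lt_of_lt_mul (by have := hi' i; omega)
        set q := (k + (i : ℕ)) / m with hq
        set r := (k + (i : ℕ)) % m with hr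
        have hi := hi' i
        interval_cases q <;> omega))]
    simp

private lemma traceMonomial {L : Type*} [Field L] {m : ℕ} (hm : 0 < m) (D a : L) (s : ℕ)
    (hs : s < 2 * m) :
    Algebra.trace L (AdjoinRoot (X ^ m - C D))
        ((m : AdjoinRoot (X ^ m - C D)) * algebraMap L (AdjoinRoot (X ^ m - C D)) a *
          AdjoinRoot.root (X ^ m - C D) ^ s) =
      if s = 0 then (m : L) * a * m else if s = m then (m : L) * a * ((m : L) * D) else 0 := by
  have h1 : (m : AdjoinRoot (X ^ m - C D)) * algebraMap L (AdjoinRoot (X ^ m - C D)) a *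
      AdjoinRoot.root (X ^ m - C D) ^ s
      = ((m : L) * a) • AdjoinRoot.root (X ^ m - C D) ^ s := by
    rw [Algebra.smul_def, map_mul, map_natCast]
  rw [h1, map_smul, smul_eq_mul, traceRootPow hm D s hs]
  split_ifs <;> ring

private lemma traceExpand {L : Type*} [Field L] {m : ℕ} (D a : L) (α β α' β' : L)
    (p q p' q' : ℕ) :
    Algebra.trace L (AdjoinRoot (X ^ m - C D))
        ((m : AdjoinRoot (X ^ m - C D)) * algebraMap L (AdjoinRoot (X ^ m - C D)) a *
          (α • AdjoinRoot.root (X ^ m - C D) ^ p + β • AdjoinRoot.root (X ^ m - C D) ^ q) *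
          (α' • AdjoinRoot.root (X ^ m - C D) ^ p' + β' • AdjoinRoot.root (X ^ m - C D) ^ q')) =
      α * α' * Algebra.trace L (AdjoinRoot (X ^ m - C D))
          ((m : AdjoinRoot (X ^ m - C D)) * algebraMap L (AdjoinRoot (X ^ m - C D)) a * AdjoinRoot.root (X ^ m - C D) ^ (p + p')) +
      α * β' * Algebra.trace L (AdjoinRoot (X ^ m - C D))
          ((m : AdjoinRoot (X ^ m - C D)) * algebraMap L (AdjoinRoot (X ^ m - C D)) a * AdjoinRoot.root (X ^ m - C D) ^ (p + q')) +
      β * α' * Algebra.trace L (AdjoinRoot (X ^ m - C D))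
          ((m : AdjoinRoot (X ^ m - C D)) * algebraMap L (AdjoinRoot (X ^ m - C D)) a * AdjoinRoot.root (X ^ m - C D) ^ (q + p')) +
      β * β' * Algebra.trace L (AdjoinRoot (X ^ m - C D))
          ((m : AdjoinRoot (X ^ m - C D)) * algebraMap L (AdjoinRoot (X ^ m - C D)) a * AdjoinRoot.root (X ^ m - C D) ^ (q + q')) := by
  have key : (m : AdjoinRoot (X ^ m - C D)) * algebraMap L (AdjoinRoot (X ^ m - C D)) a *
      (α • AdjoinRoot.root (X ^ m - C D) ^ p + β • AdjoinRoot.root (X ^ m - C D) ^ q) *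
      (α' • AdjoinRoot.root (X ^ m - C D) ^ p' + β' • AdjoinRoot.root (X ^ m - C D) ^ q')
      = (α * α') • ((m : AdjoinRoot (X ^ m - C D)) * algebraMap L (AdjoinRoot (X ^ m - C D)) a * AdjoinRoot.root (X ^ m - C D) ^ (p + p'))
      + (α * β') • ((m : AdjoinRoot (X ^ m - C D)) * algebraMap L (AdjoinRoot (X ^ m - C D)) a * AdjoinRoot.root (X ^ m - C D) ^ (p + q'))
      + (β * α') • ((m : AdjoinRoot (X ^ m - C D)) * algebraMap L (AdjoinRoot (X ^ m - C D)) a * AdjoinRoot.root (X ^ m - C D) ^ (q + p'))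
      + (β * β') • ((m : AdjoinRoot (X ^ m - C D)) * algebraMap L (AdjoinRoot (X ^ m - C D)) a * AdjoinRoot.root (X ^ m - C D) ^ (q + q')) := by
    simp only [Algebra.smul_def, map_mul, pow_add]
    ring
  rw [key]
  simp only [map_add, map_smul, smul_eq_mul]

set_option maxHeartbeats 1600000 in
/-- For `m` even, `char L ∤ 2m`, and `D, a ∈ Lˣ`, the bilinear form
`(u, v) ↦ Tr_{E/L}(m·a·u·v)` on `E = L[x]/(x^m − D)` is isometric to
`⟨a⟩ ⊥ ⟨a·D⟩ ⊥ ((m−2)/2)·h`, i.e. to the diagonal form `⟨a, a·D, 1, −1, …, 1, −1⟩`. -/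
theorem trace_form_scaled_even (L : Type*) [Field L] (m : ℕ) (hm : 2 ≤ m) (heven : Even m)
    (hchar : ((2 * m : ℕ) : L) ≠ 0) (D a : L) (hD : D ≠ 0) (ha : a ≠ 0) :
    ∃ e : (Fin m → L) ≃ₗ[L] AdjoinRoot (X ^ m - C D),
      ∀ u v : Fin m → L,
        Algebra.trace L (AdjoinRoot (X ^ m - C D))
            ((m : AdjoinRoot (X ^ m - C D)) *
              algebraMap L (AdjoinRoot (X ^ m - C D)) a * e u * e v) =
        ∑ i : Fin m,
          (if (i : ℕ) = 0 then a
            else if (i : ℕ) = 1 then a * D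
            else if (i : ℕ) % 2 = 0 then 1 else -1) * u i * v i := by
  have hm0 : 0 < m := by omega
  have hmL : (m : L) ≠ 0 := by
    intro h; apply hchar; push_cast; rw [h, mul_zero]
  have h2 : (2 : L) ≠ 0 := by
    intro h; apply hchar; push_cast; rw [h, zero_mul]
  have hme : m % 2 = 0 := Nat.even_iff.mp heven
  have hDa : (2 : L) * (m : L) ^ 2 * a * D ≠ 0 :=
    mul_ne_zero (mul_ne_zero (mul_ne_zero h2 (pow_ne_zero _ hmL)) ha) hD
  set ga : L := ((2 : L) * (m : L) ^ 2 * a * D)⁻¹ with hga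
  have hkeyA : ((m : L))⁻¹ * (m : L)⁻¹ * ((m : L) * a * (m : L)) = a := by
    field_simp
  have hkeyB : ((m : L))⁻¹ * (m : L)⁻¹ * ((m : L) * a * ((m : L) * D)) = a * D := by
    field_simp
  have hkeyC : (2 : L) * ga * ((m : L) * a * ((m : L) * D)) = 1 := by
    rw [hga]
    rw [show (2 : L) * ((2 : L) * (m : L) ^ 2 * a * D)⁻¹ * ((m : L) * a * ((m : L) * D))
        = ((2 : L) * (m : L) ^ 2 * a * D)⁻¹ * ((2 : L) * (m : L) ^ 2 * a * D) from by ring]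
    exact inv_mul_cancel₀ hDa
  clear_value ga
  set P : ℕ → ℕ := fun n => if n = 0 then 0 else if n = 1 then m / 2 else n / 2 with hP
  set Q : ℕ → ℕ := fun n => if n ≤ 1 then 0 else m - n / 2 with hQ
  set Av : ℕ → L := fun n => if n ≤ 1 then (m : L)⁻¹ else 1 with hAv
  set Bv : ℕ → L := fun n => if n ≤ 1 then 0 else if n % 2 = 0 then ga else -ga with hBv
  set w : Fin m → AdjoinRoot (X ^ m - C D) := fun i =>
    Av (i : ℕ) • AdjoinRoot.root (X ^ m - C D) ^ P (i : ℕ) + Bv (i : ℕ) • AdjoinRoot.root (X ^ m - C D) ^ Q (i : ℕ) with hwdef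
  clear_value P Q Av Bv w
  have key0' : ∀ s : ℕ, s = 0 →
      Algebra.trace L (AdjoinRoot (X ^ m - C D)) ((m : AdjoinRoot (X ^ m - C D)) * algebraMap L (AdjoinRoot (X ^ m - C D)) a * AdjoinRoot.root (X ^ m - C D) ^ s) = (m : L) * a * m := by
    intro s hs; rw [traceMonomial hm0 D a s (by omega), if_pos hs]
  have keym' : ∀ s : ℕ, s = m →
      Algebra.trace L (AdjoinRoot (X ^ m - C D)) ((m : AdjoinRoot (X ^ m - C D)) * algebraMap L (AdjoinRoot (X ^ m - C D)) a * AdjoinRoot.root (X ^ m - C D) ^ s) = (m : L) * a * ((m : L) * D) := by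
    intro s hs; rw [traceMonomial hm0 D a s (by omega), if_neg (by omega), if_pos hs]
  have keyz : ∀ s : ℕ, s ≠ 0 → s ≠ m → s < 2 * m →
      Algebra.trace L (AdjoinRoot (X ^ m - C D)) ((m : AdjoinRoot (X ^ m - C D)) * algebraMap L (AdjoinRoot (X ^ m - C D)) a * AdjoinRoot.root (X ^ m - C D) ^ s) = 0 := by
    intro s h1' h2' h3'; rw [traceMonomial hm0 D a s h3', if_neg h1', if_neg h2']
  have hgram0 : ∀ i j : Fin m, (i : ℕ) ≤ (j : ℕ) →
      Algebra.trace L (AdjoinRoot (X ^ m - C D)) ((m : AdjoinRoot (X ^ m - C D)) * algebraMap L (AdjoinRoot (X ^ m - C D)) a * w i * w j) =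
        if i = j then
          (if (i : ℕ) = 0 then a else if (i : ℕ) = 1 then a * D
            else if (i : ℕ) % 2 = 0 then (1 : L) else -1)
        else 0 := by
    intro i j hij
    have hi := i.isLt
    have hj := j.isLt
    simp only [hwdef]
    rw [traceExpand]
    by_cases hi0 : (i : ℕ) = 0
    · have ePi : P (i : ℕ) = 0 := by simp only [hP]; rw [if_pos hi0]
      have eQi : Q (i : ℕ) = 0 := by simp only [hQ]; rw [if_pos (by omega)]
      have eAi : Av (i : ℕ) = (m : L)⁻¹ := by simp only [hAv]; rw [if_pos (by omega)]
      have eBi : Bv (i : ℕ) = 0 := by simp only [hBv]; rw [if_pos (by omega)]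
      by_cases hj0 : (j : ℕ) = 0
      · have hijeq : i = j := Fin.ext (by omega)
        have ePj : P (j : ℕ) = 0 := by simp only [hP]; rw [if_pos hj0]
        have eQj : Q (j : ℕ) = 0 := by simp only [hQ]; rw [if_pos (by omega)]
        have eAj : Av (j : ℕ) = (m : L)⁻¹ := by simp only [hAv]; rw [if_pos (by omega)]
        have eBj : Bv (j : ℕ) = 0 := by simp only [hBv]; rw [if_pos (by omega)]
        rw [ePi, eQi, ePj, eQj, eAi, eAj, eBi, eBj,
          key0' (0 + 0) (by omega), if_pos hijeq, if_pos hi0]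
        linear_combination hkeyA
      by_cases hj1 : (j : ℕ) = 1
      · have ePj : P (j : ℕ) = m / 2 := by
          simp only [hP]; rw [if_neg (by omega), if_pos hj1]
        have eQj : Q (j : ℕ) = 0 := by simp only [hQ]; rw [if_pos (by omega)]
        have eBj : Bv (j : ℕ) = 0 := by simp only [hBv]; rw [if_pos (by omega)]
        rw [ePi, eQi, ePj, eQj, eBi, eBj,
          keyz (0 + m / 2) (by omega) (by omega) (by omega),
          key0' (0 + 0) (by omega), if_neg (by intro h; rw [h] at hi0; omega)]
        ring
      · have ePj : P (j : ℕ) = (j : ℕ) / 2 := by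
          simp only [hP]; rw [if_neg (by omega), if_neg (by omega)]
        have eQj : Q (j : ℕ) = m - (j : ℕ) / 2 := by
          simp only [hQ]; rw [if_neg (by omega)]
        rw [ePi, eQi, ePj, eQj,
          keyz (0 + (j : ℕ) / 2) (by omega) (by omega) (by omega),
          keyz (0 + (m - (j : ℕ) / 2)) (by omega) (by omega) (by omega),
          if_neg (by intro h; rw [h] at hi0; omega)]
        ring
    by_cases hi1 : (i : ℕ) = 1
    · have ePi : P (i : ℕ) = m / 2 := by
        simp only [hP]; rw [if_neg (by omega), if_pos hi1]
      have eQi : Q (i : ℕ) = 0 := by simp only [hQ]; rw [if_pos (by omega)]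
      have eAi : Av (i : ℕ) = (m : L)⁻¹ := by simp only [hAv]; rw [if_pos (by omega)]
      have eBi : Bv (i : ℕ) = 0 := by simp only [hBv]; rw [if_pos (by omega)]
      by_cases hj1 : (j : ℕ) = 1
      · have hijeq : i = j := Fin.ext (by omega)
        have eAj : Av (j : ℕ) = (m : L)⁻¹ := by simp only [hAv]; rw [if_pos (by omega)]
        have eBj : Bv (j : ℕ) = 0 := by simp only [hBv]; rw [if_pos (by omega)]
        have ePj : P (j : ℕ) = m / 2 := by
          simp only [hP]; rw [if_neg (by omega), if_pos hj1]
        have eQj : Q (j : ℕ) = 0 := by simp only [hQ]; rw [if_pos (by omega)]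
        rw [ePi, eQi, ePj, eQj, eAi, eAj, eBi, eBj,
          keym' (m / 2 + m / 2) (by omega),
          keyz (m / 2 + 0) (by omega) (by omega) (by omega),
          keyz (0 + m / 2) (by omega) (by omega) (by omega),
          key0' (0 + 0) (by omega),
          if_pos hijeq, if_neg hi0, if_pos hi1]
        linear_combination hkeyB
      · have ePj : P (j : ℕ) = (j : ℕ) / 2 := by
          simp only [hP]; rw [if_neg (by omega), if_neg (by omega)]
        have eQj : Q (j : ℕ) = m - (j : ℕ) / 2 := by
          simp only [hQ]; rw [if_neg (by omega)]
        rw [ePi, eQi, ePj, eQj,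
          keyz (m / 2 + (j : ℕ) / 2) (by omega) (by omega) (by omega),
          keyz (m / 2 + (m - (j : ℕ) / 2)) (by omega) (by omega) (by omega),
          keyz (0 + (j : ℕ) / 2) (by omega) (by omega) (by omega),
          keyz (0 + (m - (j : ℕ) / 2)) (by omega) (by omega) (by omega),
          if_neg (by intro h; rw [h] at hi1; omega)]
        ring
    · have ePi : P (i : ℕ) = (i : ℕ) / 2 := by
        simp only [hP]; rw [if_neg (by omega), if_neg (by omega)]
      have eQi : Q (i : ℕ) = m - (i : ℕ) / 2 := by
        simp only [hQ]; rw [if_neg (by omega)]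
      have ePj : P (j : ℕ) = (j : ℕ) / 2 := by
        simp only [hP]; rw [if_neg (by omega), if_neg (by omega)]
      have eQj : Q (j : ℕ) = m - (j : ℕ) / 2 := by
        simp only [hQ]; rw [if_neg (by omega)]
      have eAi : Av (i : ℕ) = 1 := by simp only [hAv]; rw [if_neg (by omega)]
      have eAj : Av (j : ℕ) = 1 := by simp only [hAv]; rw [if_neg (by omega)]
      rw [ePi, eQi, ePj, eQj,
        keyz ((i : ℕ) / 2 + (j : ℕ) / 2) (by omega) (by omega) (by omega),
        keyz ((m - (i : ℕ) / 2) + (m - (j : ℕ) / 2)) (by omega) (by omega) (by omega)]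
      by_cases hkl : (i : ℕ) / 2 = (j : ℕ) / 2
      · rw [keym' ((i : ℕ) / 2 + (m - (j : ℕ) / 2)) (by omega),
          keym' ((m - (i : ℕ) / 2) + (j : ℕ) / 2) (by omega), eAi, eAj]
        by_cases hpi : (i : ℕ) % 2 = 0
        · by_cases hpj : (j : ℕ) % 2 = 0
          · have hijeq : i = j := Fin.ext (by omega)
            have eBi : Bv (i : ℕ) = ga := by
              simp only [hBv]; rw [if_neg (by omega), if_pos hpi]
            have eBj : Bv (j : ℕ) = ga := by
              simp only [hBv]; rw [if_neg (by omega), if_pos hpj]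
            rw [eBi, eBj, if_pos hijeq, if_neg hi0, if_neg hi1, if_pos hpi]
            linear_combination hkeyC
          · have hne : i ≠ j := by intro h; rw [h] at hpi; omega
            have eBi : Bv (i : ℕ) = ga := by
              simp only [hBv]; rw [if_neg (by omega), if_pos hpi]
            have eBj : Bv (j : ℕ) = -ga := by
              simp only [hBv]; rw [if_neg (by omega), if_neg hpj]
            rw [eBi, eBj, if_neg hne]
            ring
        · by_cases hpj : (j : ℕ) % 2 = 0
          · have hne : i ≠ j := by intro h; rw [h] at hpi; omega
            have eBi : Bv (i : ℕ) = -ga := by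
              simp only [hBv]; rw [if_neg (by omega), if_neg hpi]
            have eBj : Bv (j : ℕ) = ga := by
              simp only [hBv]; rw [if_neg (by omega), if_pos hpj]
            rw [eBi, eBj, if_neg hne]
            ring
          · have hijeq : i = j := Fin.ext (by omega)
            have eBi : Bv (i : ℕ) = -ga := by
              simp only [hBv]; rw [if_neg (by omega), if_neg hpi]
            have eBj : Bv (j : ℕ) = -ga := by
              simp only [hBv]; rw [if_neg (by omega), if_neg hpj]
            rw [eBi, eBj, if_pos hijeq, if_neg hi0, if_neg hi1, if_neg hpi]
            linear_combination (-1 : L) * hkeyC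
      · have hne : i ≠ j := by intro h; rw [h] at hkl; omega
        rw [keyz ((i : ℕ) / 2 + (m - (j : ℕ) / 2)) (by omega) (by omega) (by omega),
          keyz ((m - (i : ℕ) / 2) + (j : ℕ) / 2) (by omega) (by omega) (by omega),
          if_neg hne]
        ring
  have hgram : ∀ i j : Fin m,
      Algebra.trace L (AdjoinRoot (X ^ m - C D)) ((m : AdjoinRoot (X ^ m - C D)) * algebraMap L (AdjoinRoot (X ^ m - C D)) a * w i * w j) =
        if i = j then
          (if (i : ℕ) = 0 then a else if (i : ℕ) = 1 then a * D
            else if (i : ℕ) % 2 = 0 then (1 : L) else -1)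
        else 0 := by
    intro i j
    rcases le_total (i : ℕ) (j : ℕ) with h | h
    · exact hgram0 i j h
    · have hsym : (m : AdjoinRoot (X ^ m - C D)) * algebraMap L (AdjoinRoot (X ^ m - C D)) a * w i * w j = (m : AdjoinRoot (X ^ m - C D)) * algebraMap L (AdjoinRoot (X ^ m - C D)) a * w j * w i := by ring
      rw [hsym, hgram0 j i h]
      by_cases hij : i = j
      · subst hij; simp
      · rw [if_neg (fun hh => hij hh.symm), if_neg hij]
  have hmain : ∀ u v : Fin m → L,
      Algebra.trace L (AdjoinRoot (X ^ m - C D)) ((m : AdjoinRoot (X ^ m - C D)) * algebraMap L (AdjoinRoot (X ^ m - C D)) a * (∑ i, u i • w i) * (∑ j, v j • w j)) =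
        ∑ i : Fin m,
          (if (i : ℕ) = 0 then a
            else if (i : ℕ) = 1 then a * D
            else if (i : ℕ) % 2 = 0 then 1 else -1) * u i * v i := by
    intro u v
    have hexp : (m : AdjoinRoot (X ^ m - C D)) * algebraMap L (AdjoinRoot (X ^ m - C D)) a * (∑ i, u i • w i) * (∑ j, v j • w j)
        = ∑ i, ∑ j, (u i * v j) • ((m : AdjoinRoot (X ^ m - C D)) * algebraMap L (AdjoinRoot (X ^ m - C D)) a * w i * w j) := by
      rw [mul_assoc, Finset.sum_mul_sum, Finset.mul_sum]
      refine Finset.sum_congr rfl fun i _ => ?_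
      rw [Finset.mul_sum]
      refine Finset.sum_congr rfl fun j _ => ?_
      rw [Algebra.smul_def, Algebra.smul_def, Algebra.smul_def, map_mul]
      ring
    rw [hexp, map_sum]
    refine Finset.sum_congr rfl fun i _ => ?_
    rw [map_sum]
    rw [Finset.sum_congr rfl fun j _ => by rw [map_smul, smul_eq_mul, hgram i j]]
    simp only [mul_ite, mul_zero]
    rw [Finset.sum_ite_eq _ i _]
    simp only [Finset.mem_univ, if_true]
    split_ifs <;> ring
  let eL : (Fin m → L) →ₗ[L] AdjoinRoot (X ^ m - C D) :=
    { toFun := fun u => ∑ i, u i • w i,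
       map_add' := fun u v => by simp [add_smul, Finset.sum_add_distrib],
       map_smul' := fun r u => by simp [Finset.smul_sum, smul_smul] }
  have hinj : Function.Injective eL := by
    rw [← LinearMap.ker_eq_bot, LinearMap.ker_eq_bot']
    intro u hu
    funext i0
    show u i0 = 0
    have hz : (∑ i, u i • w i) = (0 : AdjoinRoot (X ^ m - C D)) := hu
    have h1 := hmain u (Pi.single i0 1)
    rw [hz, mul_zero, zero_mul, map_zero] at h1
    simp only [Pi.single_apply, mul_ite, mul_one, mul_zero, Finset.sum_ite_eq',
      Finset.mem_univ, if_true] at h1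
    have hc : (if (i0 : ℕ) = 0 then a else if (i0 : ℕ) = 1 then a * D
        else if (i0 : ℕ) % 2 = 0 then (1 : L) else -1) ≠ 0 := by
      split_ifs
      · exact ha
      · exact mul_ne_zero ha hD
      · exact one_ne_zero
      · exact neg_ne_zero.mpr one_ne_zero
    rcases mul_eq_zero.mp h1.symm with h | h
    · exact absurd h hc
    · exact h
  have hmon : (X ^ m - C D).Monic := monic_X_pow_sub_C D (by omega)
  haveI : Module.Finite L (AdjoinRoot (X ^ m - C D)) := Module.Finite.of_basis (AdjoinRoot.powerBasis' hmon).basis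
  have hfr : Module.finrank L (Fin m → L) = Module.finrank L (AdjoinRoot (X ^ m - C D)) := by
    rw [(AdjoinRoot.powerBasis' hmon).finrank, AdjoinRoot.powerBasis'_dim,
      natDegree_X_pow_sub_C, Module.finrank_fin_fun]
  have hsurj := (LinearMap.injective_iff_surjective_of_finrank_eq_finrank hfr).mp hinj
  refine ⟨LinearEquiv.ofBijective eL ⟨hinj, hsurj⟩, fun u v => ?_⟩
  exact hmain u v
end

section
/- Let L be a field whose characteristic does not divide 2m, let m ≥ 1 be an odd integer, let D, a ∈ L be nonzero, and let E = L[x]/(x^m − D). Then the symmetric L-bilinear form on E given by (u, v) ↦ Tr_{E/L}(m·a·x·u·v) is isometric to ⟨a·D⟩ ⊥ ((m−1)/2)·h. -/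
open Polynomial

set_option linter.unusedSectionVars false in
private lemma trace_gen_pow_of_lt' {L A : Type*} [Field L] [CommRing A] [Algebra L A]
    (pb : PowerBasis L A) {D : L}
    (hgen : pb.gen ^ pb.dim = algebraMap L A D)
    {s : ℕ} (h1 : 1 ≤ s) (h2 : s < pb.dim) :
    Algebra.trace L A (pb.gen ^ s) = 0 := by
  classical
  rw [Algebra.trace_eq_matrix_trace pb.basis, Matrix.trace]
  refine Finset.sum_eq_zero fun i _ => ?_
  rw [Matrix.diag_apply, Algebra.leftMulMatrix_eq_repr_mul, PowerBasis.coe_basis, ← pow_add]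
  by_cases h : s + (i : ℕ) < pb.dim
  · have hb : pb.gen ^ (s + (i : ℕ)) = pb.basis ⟨s + (i : ℕ), h⟩ := by
      rw [PowerBasis.coe_basis]
    rw [hb, Module.Basis.repr_self, Finsupp.single_apply]
    rw [if_neg]
    intro h'
    have h2 : s + (i : ℕ) = (i : ℕ) := Fin.mk_eq_mk.mp h'
    omega
  · have hr : s + (i : ℕ) - pb.dim < pb.dim := by omega
    have hb : pb.gen ^ (s + (i : ℕ)) = D • pb.basis ⟨s + (i : ℕ) - pb.dim, hr⟩ := by
      rw [PowerBasis.coe_basis, Algebra.smul_def, ← hgen, ← pow_add]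
      congr 1
      simp only [Fin.val_mk]
      omega
    rw [hb, map_smul, Finsupp.smul_apply, Module.Basis.repr_self, Finsupp.single_apply, smul_eq_mul]
    rw [if_neg, mul_zero]
    intro h'
    have h2 : s + (i : ℕ) - pb.dim = (i : ℕ) := Fin.mk_eq_mk.mp h'
    omega

private lemma trace_gen_pow' {L A : Type*} [Field L] [CommRing A] [Algebra L A]
    (pb : PowerBasis L A) {D : L}
    (hgen : pb.gen ^ pb.dim = algebraMap L A D)
    {t : ℕ} (h1 : 1 ≤ t) (h2 : t ≤ 2 * pb.dim - 1) :
    Algebra.trace L A (pb.gen ^ t) = if t = pb.dim then (pb.dim : L) * D else 0 := by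
  classical
  rcases lt_trichotomy t pb.dim with h | h | h
  · rw [if_neg (by omega), trace_gen_pow_of_lt' pb hgen h1 h]
  · rw [if_pos h, h, hgen, Algebra.trace_algebraMap_of_basis pb.basis]
    simp [nsmul_eq_mul]
  · rw [if_neg (by omega)]
    have ht : t = pb.dim + (t - pb.dim) := by omega
    rw [ht, pow_add, hgen, ← Algebra.smul_def, map_smul,
      trace_gen_pow_of_lt' pb hgen (by omega) (by omega), smul_zero]

/-- For `m` odd, `char L ∤ 2m`, and `D, a ∈ Lˣ`, the bilinear form
`(u, v) ↦ Tr_{E/L}(m·a·x·u·v)` on `E = L[x]/(x^m − D)` is isometric to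
`⟨a·D⟩ ⊥ ((m−1)/2)·h`, i.e. to the diagonal form `⟨a·D, 1, −1, …, 1, −1⟩`. -/
theorem trace_form_scaled_root_odd (L : Type*) [Field L] (m : ℕ) (hm : 1 ≤ m) (hodd : Odd m)
    (hchar : ((2 * m : ℕ) : L) ≠ 0) (D a : L) (hD : D ≠ 0) (ha : a ≠ 0) :
    ∃ e : (Fin m → L) ≃ₗ[L] AdjoinRoot (X ^ m - C D),
      ∀ u v : Fin m → L,
        Algebra.trace L (AdjoinRoot (X ^ m - C D))
            ((m : AdjoinRoot (X ^ m - C D)) *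
              algebraMap L (AdjoinRoot (X ^ m - C D)) a *
              AdjoinRoot.root (X ^ m - C D) * e u * e v) =
        ∑ i : Fin m,
          (if (i : ℕ) = 0 then a * D else if (i : ℕ) % 2 = 1 then 1 else -1) * u i * v i := by
  classical
  obtain ⟨p, hp⟩ := hodd
  have hmL : (m : L) ≠ 0 := by
    intro h; apply hchar; push_cast; rw [h, mul_zero]
  have h2L : (2 : L) ≠ 0 := by
    intro h; apply hchar; push_cast; rw [h, zero_mul]
  have hf0 : (X ^ m - C D : L[X]) ≠ 0 := (monic_X_pow_sub_C D (by omega)).ne_zero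
  set E := AdjoinRoot (X ^ m - C D) with hE
  set pb : PowerBasis L E := AdjoinRoot.powerBasis hf0 with hpbdef
  have hdim : pb.dim = m := by
    simp [hpbdef, AdjoinRoot.powerBasis, natDegree_X_pow_sub_C]
  have hgen0 : pb.gen = AdjoinRoot.root (X ^ m - C D) := rfl
  have hgen : pb.gen ^ pb.dim = algebraMap L E D := by
    rw [hdim, hgen0, root_X_pow_sub_C_pow, ← AdjoinRoot.algebraMap_eq]
  set γ : L := ((2 : L) * (m : L) ^ 2 * a * D)⁻¹ with hγ
  set d : Fin m → L :=
    fun i => if (i : ℕ) = 0 then a * D else if (i : ℕ) % 2 = 1 then 1 else -1 with hd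
  set b : Fin m → E := fun i =>
    if (i : ℕ) = 0 then ((m : L))⁻¹ • pb.gen ^ p
    else γ • pb.gen ^ (((i : ℕ) - 1) / 2)
      + (if (i : ℕ) % 2 = 1 then (1 : L) else -1) • pb.gen ^ (m - 1 - ((i : ℕ) - 1) / 2) with hb
  have Tr : ∀ t : ℕ, 1 ≤ t → t ≤ 2 * m - 1 →
      Algebra.trace L E (pb.gen ^ t) = if t = m then (m : L) * D else 0 := by
    intro t h1 h2
    have := trace_gen_pow' pb hgen (t := t) h1 (by omega)
    rwa [hdim] at this
  have main : ∀ x y : E,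
      Algebra.trace L E ((m : E) * algebraMap L E a * AdjoinRoot.root (X ^ m - C D) * x * y)
        = ((m : L) * a) * Algebra.trace L E (pb.gen * (x * y)) := by
    intro x y
    rw [show (m : E) * algebraMap L E a * AdjoinRoot.root (X ^ m - C D) * x * y
        = ((m : L) * a) • (pb.gen * (x * y)) by
      rw [Algebra.smul_def, map_mul, map_natCast, hgen0]; ring]
    rw [map_smul, smul_eq_mul]
  have key : ∀ i j : Fin m,
      ((m : L) * a) * Algebra.trace L E (pb.gen * (b i * b j)) = if i = j then d i else 0 := by
    intro i j
    have him : (i : ℕ) < m := i.isLt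
    have hjm : (j : ℕ) < m := j.isLt
    by_cases hi : (i : ℕ) = 0 <;> by_cases hj : (j : ℕ) = 0
    · have hij : i = j := Fin.ext (by omega)
      rw [if_pos hij, hd]
      have hprod : pb.gen * (b i * b j)
          = algebraMap L E ((m : L)⁻¹ * (m : L)⁻¹) * pb.gen ^ (p + p + 1) := by
        simp only [hb, if_pos hi, if_pos hj, Algebra.smul_def, map_mul]
        ring
      rw [hprod, ← Algebra.smul_def, map_smul, smul_eq_mul,
        Tr (p + p + 1) (by omega) (by omega), if_pos (by omega)]
      simp only [if_pos hi]
      field_simp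
    · have hij : i ≠ j := fun h => hj (h ▸ hi)
      rw [if_neg hij]
      set l := ((j : ℕ) - 1) / 2 with hl
      have hlp : l < p := by omega
      have T1 : Algebra.trace L E (pb.gen ^ (p + l + 1)) = 0 := by
        rw [Tr _ (by omega) (by omega)]
        exact if_neg (by omega)
      have T2 : Algebra.trace L E (pb.gen ^ (p + (m - 1 - l) + 1)) = 0 := by
        rw [Tr _ (by omega) (by omega)]
        exact if_neg (by omega)
      have hprod : pb.gen * (b i * b j)
          = algebraMap L E ((m : L)⁻¹ * γ) * pb.gen ^ (p + l + 1)
            + algebraMap L E ((m : L)⁻¹ * (if (j : ℕ) % 2 = 1 then (1 : L) else -1))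
              * pb.gen ^ (p + (m - 1 - l) + 1) := by
        simp only [hb, if_pos hi, if_neg hj, Algebra.smul_def, map_mul]
        ring
      rw [hprod, map_add, ← Algebra.smul_def, ← Algebra.smul_def, map_smul, map_smul,
        smul_eq_mul, smul_eq_mul, T1, T2]
      ring
    · have hij : i ≠ j := fun h => hi (h ▸ hj)
      rw [if_neg hij]
      set k := ((i : ℕ) - 1) / 2 with hk
      have hkp : k < p := by omega
      have T1 : Algebra.trace L E (pb.gen ^ (p + k + 1)) = 0 := by
        rw [Tr _ (by omega) (by omega)]
        exact if_neg (by omega)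
      have T2 : Algebra.trace L E (pb.gen ^ (p + (m - 1 - k) + 1)) = 0 := by
        rw [Tr _ (by omega) (by omega)]
        exact if_neg (by omega)
      have hprod : pb.gen * (b i * b j)
          = algebraMap L E ((m : L)⁻¹ * γ) * pb.gen ^ (p + k + 1)
            + algebraMap L E ((m : L)⁻¹ * (if (i : ℕ) % 2 = 1 then (1 : L) else -1))
              * pb.gen ^ (p + (m - 1 - k) + 1) := by
        simp only [hb, if_neg hi, if_pos hj, Algebra.smul_def, map_mul]
        ring
      rw [hprod, map_add, ← Algebra.smul_def, ← Algebra.smul_def, map_smul, map_smul,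
        smul_eq_mul, smul_eq_mul, T1, T2]
      ring
    · set k := ((i : ℕ) - 1) / 2 with hk
      set l := ((j : ℕ) - 1) / 2 with hl
      have hkp : k < p := by omega
      have hlp : l < p := by omega
      have T1 : Algebra.trace L E (pb.gen ^ (k + l + 1)) = 0 := by
        rw [Tr _ (by omega) (by omega), if_neg (by omega)]
      have T4 : Algebra.trace L E (pb.gen ^ ((m - 1 - k) + (m - 1 - l) + 1)) = 0 := by
        rw [Tr _ (by omega) (by omega), if_neg (by omega)]
      have T2 : Algebra.trace L E (pb.gen ^ (k + (m - 1 - l) + 1))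
          = if k = l then (m : L) * D else 0 := by
        rw [Tr _ (by omega) (by omega)]
        by_cases hkl : k = l
        · rw [if_pos (by omega), if_pos hkl]
        · rw [if_neg (by omega), if_neg hkl]
      have T3 : Algebra.trace L E (pb.gen ^ ((m - 1 - k) + l + 1))
          = if k = l then (m : L) * D else 0 := by
        rw [Tr _ (by omega) (by omega)]
        by_cases hkl : k = l
        · rw [if_pos (by omega), if_pos hkl]
        · rw [if_neg (by omega), if_neg hkl]
      have hprod : pb.gen * (b i * b j)
          = algebraMap L E (γ * γ) * pb.gen ^ (k + l + 1)
          + algebraMap L E (γ * (if (j : ℕ) % 2 = 1 then (1 : L) else -1))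
              * pb.gen ^ (k + (m - 1 - l) + 1)
          + algebraMap L E (γ * (if (i : ℕ) % 2 = 1 then (1 : L) else -1))
              * pb.gen ^ ((m - 1 - k) + l + 1)
          + algebraMap L E ((if (i : ℕ) % 2 = 1 then (1 : L) else -1)
                * (if (j : ℕ) % 2 = 1 then (1 : L) else -1))
              * pb.gen ^ ((m - 1 - k) + (m - 1 - l) + 1) := by
        simp only [hb, if_neg hi, if_neg hj, Algebra.smul_def, map_mul]
        ring
      rw [hprod, map_add, map_add, map_add,
        ← Algebra.smul_def, ← Algebra.smul_def, ← Algebra.smul_def, ← Algebra.smul_def,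
        map_smul, map_smul, map_smul, map_smul,
        smul_eq_mul, smul_eq_mul, smul_eq_mul, smul_eq_mul, T1, T2, T3, T4]
      by_cases hkl : k = l
      · rw [if_pos hkl]
        by_cases hpi : (i : ℕ) % 2 = 1 <;> by_cases hpj : (j : ℕ) % 2 = 1
        · have hij : i = j := Fin.ext (by omega)
          rw [if_pos hij, hd]
          simp only [if_neg hi, if_pos hpi, if_pos hpj]
          have hc : (2 : L) * (m : L) ^ 2 * a * D ≠ 0 :=
            mul_ne_zero (mul_ne_zero (mul_ne_zero h2L (pow_ne_zero 2 hmL)) ha) hD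
          have hγ1 : ((2 : L) * (m : L) ^ 2 * a * D) * γ = 1 := by
            rw [hγ]; exact mul_inv_cancel₀ hc
          linear_combination hγ1
        · have hij : i ≠ j := fun h => hpj (h ▸ hpi)
          rw [if_neg hij, if_pos hpi, if_neg hpj]
          ring
        · have hij : i ≠ j := fun h => hpi (h ▸ hpj)
          rw [if_neg hij, if_neg hpi, if_pos hpj]
          ring
        · have hij : i = j := Fin.ext (by omega)
          rw [if_pos hij, hd]
          simp only [if_neg hi, if_neg hpi, if_neg hpj]
          have hc : (2 : L) * (m : L) ^ 2 * a * D ≠ 0 :=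
            mul_ne_zero (mul_ne_zero (mul_ne_zero h2L (pow_ne_zero 2 hmL)) ha) hD
          have hγ1 : ((2 : L) * (m : L) ^ 2 * a * D) * γ = 1 := by
            rw [hγ]; exact mul_inv_cancel₀ hc
          linear_combination (-1 : L) * hγ1
      · rw [if_neg hkl]
        have hij : i ≠ j := fun h => hkl (by rw [hk, hl, h])
        rw [if_neg hij]
        ring
  have hli : LinearIndependent L b := by
    rw [Fintype.linearIndependent_iff]
    intro g hg j
    have h0 : ((m : L) * a) * Algebra.trace L E (pb.gen * ((∑ i, g i • b i) * b j)) = 0 := by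
      rw [hg, zero_mul, mul_zero, map_zero, mul_zero]
    have hexp : pb.gen * ((∑ i, g i • b i) * b j) = ∑ i, g i • (pb.gen * (b i * b j)) := by
      rw [Finset.sum_mul, Finset.mul_sum]
      exact Finset.sum_congr rfl fun i _ => by
        rw [smul_mul_assoc, mul_smul_comm]
    rw [hexp, map_sum, Finset.mul_sum] at h0
    have heq : ∑ i, ((m : L) * a) * Algebra.trace L E (g i • (pb.gen * (b i * b j)))
        = ∑ i, g i * (if i = j then d i else 0) := by
      refine Finset.sum_congr rfl fun i _ => ?_
      rw [map_smul, smul_eq_mul, ← key i j]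
      ring
    rw [heq] at h0
    have hsum := h0
    simp only [mul_ite, mul_zero, Finset.sum_ite_eq', Finset.mem_univ, if_true] at hsum
    have hdj : d j ≠ 0 := by
      rw [hd]
      dsimp only
      split
      · exact mul_ne_zero ha hD
      · split
        · exact one_ne_zero
        · exact neg_ne_zero.mpr one_ne_zero
    exact (mul_eq_zero.mp hsum).resolve_right hdj
  haveI : NeZero m := ⟨by omega⟩
  have hcard : Fintype.card (Fin m) = Module.finrank L E := by
    rw [Fintype.card_fin, pb.finrank, hdim]
  set Bb : Module.Basis (Fin m) L E := basisOfLinearIndependentOfCardEqFinrank hli hcard with hBb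
  refine ⟨Bb.equivFun.symm, ?_⟩
  intro u v
  have he : ∀ w : Fin m → L, Bb.equivFun.symm w = ∑ i, w i • b i := by
    intro w
    rw [Module.Basis.equivFun_symm_apply]
    exact Finset.sum_congr rfl fun i _ => by
      rw [hBb, coe_basisOfLinearIndependentOfCardEqFinrank]
  rw [main, he, he]
  have hexp2 : pb.gen * ((∑ i, u i • b i) * (∑ j, v j • b j))
      = ∑ i, ∑ j, (u i * v j) • (pb.gen * (b i * b j)) := by
    rw [Finset.sum_mul_sum, Finset.mul_sum]
    refine Finset.sum_congr rfl fun i _ => ?_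
    rw [Finset.mul_sum]
    refine Finset.sum_congr rfl fun j _ => ?_
    rw [smul_mul_smul_comm, mul_smul_comm]
  rw [hexp2, map_sum, Finset.mul_sum]
  refine Finset.sum_congr rfl fun i _ => ?_
  rw [map_sum, Finset.mul_sum]
  have hterm : ∀ j, ((m : L) * a) * Algebra.trace L E ((u i * v j) • (pb.gen * (b i * b j)))
      = (u i * v j) * (if i = j then d i else 0) := fun j => by
    rw [map_smul, smul_eq_mul, ← key i j]; ring
  rw [Finset.sum_congr rfl fun j _ => hterm j]
  simp only [mul_ite, mul_zero, Finset.sum_ite_eq, Finset.mem_univ, if_true]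
  rw [hd]
  ring
end

section
/- Let L be a field whose characteristic does not divide 2m, let m ≥ 2 be an even integer, let D, a ∈ L be nonzero, and let E = L[x]/(x^m − D). Then the symmetric L-bilinear form on E given by (u, v) ↦ Tr_{E/L}(m·a·x·u·v) is isometric to (m/2)·h, i.e. to the diagonal form ⟨1, −1, 1, −1, …, 1, −1⟩ with m/2 hyperbolic pairs. -/
open Polynomial Finset

private lemma sum_range_pair {M : Type*} [AddCommMonoid M] (F : ℕ → M) (n : ℕ) :
    ∑ i ∈ range (2 * n), F i = ∑ k ∈ range n, (F (2 * k) + F (2 * k + 1)) := by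
  induction n with
  | zero => simp
  | succ n ih =>
    rw [Nat.mul_succ, sum_range_succ, sum_range_succ, sum_range_succ, ih]
    abel

private lemma sum_range_even_split {M : Type*} [AddCommMonoid M] (F : ℕ → M) (n : ℕ) :
    ∑ i ∈ range (2 * n), F i = ∑ k ∈ range n, (F k + F (2 * n - 1 - k)) := by
  rw [sum_add_distrib]
  have h1 : ∑ k ∈ range n, F (2 * n - 1 - k) = ∑ j ∈ Ico n (2 * n), F j := by
    have := Finset.sum_Ico_reflect F 0 (m := n) (n := 2 * n - 1) (by omega)
    rcases Nat.eq_zero_or_pos n with hn | hn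
    · simp [hn]
    · rw [Nat.Ico_zero_eq_range] at this
      have he : Ico (2*n-1+1-n) (2*n-1+1-0) = Ico n (2*n) := by
        congr 1 <;> omega
      rw [this, he]
  rw [h1, ← Nat.Ico_zero_eq_range, ← Nat.Ico_zero_eq_range, Finset.sum_Ico_consecutive]
  · omega
  · omega

private lemma trace_root_pow {L : Type*} [Field L] {m : ℕ} (hm : m ≠ 0) (D : L) (t : ℕ)
    (ht : t < m) :
    Algebra.trace L (AdjoinRoot (X ^ m - C D)) (AdjoinRoot.root (X ^ m - C D) ^ t) =
      if t = 0 then (m : L) else 0 := by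
  classical
  set f : L[X] := X ^ m - C D with hf
  have hmonic : f.Monic := monic_X_pow_sub_C D hm
  have hne : f ≠ 0 := hmonic.ne_zero
  have hdeg : f.natDegree = m := natDegree_X_pow_sub_C
  set ρ := AdjoinRoot.root f with hρ
  have hroot : ρ ^ m = algebraMap L (AdjoinRoot f) D := by
    have h0 : AdjoinRoot.mk f f = 0 := AdjoinRoot.mk_self
    rw [hf] at h0
    rw [map_sub, map_pow, AdjoinRoot.mk_X, AdjoinRoot.mk_C, sub_eq_zero] at h0
    rw [hρ, h0, AdjoinRoot.algebraMap_eq]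
  let pb := AdjoinRoot.powerBasis hne
  have hdim : pb.dim = m := by rw [AdjoinRoot.powerBasis_dim, hdeg]
  let b : Module.Basis (Fin m) L (AdjoinRoot f) := pb.basis.reindex (finCongr hdim)
  have hb : ∀ i : Fin m, b i = ρ ^ (i : ℕ) := by
    intro i
    rw [show b i = pb.basis (finCongr hdim |>.symm i) from Module.Basis.reindex_apply _ _ i,
      PowerBasis.basis_eq_pow]
    simp [pb, AdjoinRoot.powerBasis_gen, hρ]
  rw [Algebra.trace_eq_matrix_trace b, Matrix.trace]
  have hdiag : ∀ i : Fin m, (Algebra.leftMulMatrix b (ρ ^ t)).diag i =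
      if t = 0 then (1 : L) else 0 := by
    intro i
    rw [Matrix.diag_apply, Algebra.leftMulMatrix_eq_repr_mul, hb i, ← pow_add]
    by_cases hlt : t + (i : ℕ) < m
    · have hbe : ρ ^ (t + (i : ℕ)) = b ⟨t + (i : ℕ), hlt⟩ := by rw [hb]
      rw [hbe, b.repr_self, Finsupp.single_apply]
      have : (⟨t + (i : ℕ), hlt⟩ : Fin m) = i ↔ t = 0 := by
        rw [Fin.ext_iff]; simp only [Fin.val_mk]; omega
      split_ifs with h1 h2 h2 <;> first | rfl | omega | (exact absurd (this.mp h1) h2) |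
        (exact absurd (this.mpr h2) h1)
    · have h1 : t + (i : ℕ) = m + (t + (i : ℕ) - m) := by omega
      have h2 : t + (i : ℕ) - m < m := by omega
      rw [h1, pow_add, hroot, ← Algebra.smul_def]
      have hbe : ρ ^ (t + (i : ℕ) - m) = b ⟨t + (i : ℕ) - m, h2⟩ := by rw [hb]
      rw [hbe, map_smul, b.repr_self]
      have hne' : (⟨t + (i : ℕ) - m, h2⟩ : Fin m) ≠ i := by
        rw [Fin.ne_iff_vne]; simp; omega
      rw [Finsupp.smul_single, Finsupp.single_apply, if_neg hne']
      have ht0 : ¬ t = 0 := by omega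
      rw [if_neg ht0]
  rw [Finset.sum_congr rfl fun i _ => hdiag i]
  split_ifs <;> simp

/-- For `m` even, `char L ∤ 2m`, and `D, a ∈ Lˣ`, the bilinear form
`(u, v) ↦ Tr_{E/L}(m·a·x·u·v)` on `E = L[x]/(x^m − D)` is isometric to
`(m/2)·h`, i.e. to the diagonal form `⟨1, −1, …, 1, −1⟩` with `m/2` hyperbolic pairs. -/
theorem trace_form_scaled_root_even (L : Type*) [Field L] (m : ℕ) (hm : 2 ≤ m) (heven : Even m)
    (hchar : ((2 * m : ℕ) : L) ≠ 0) (D a : L) (hD : D ≠ 0) (ha : a ≠ 0) :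
    ∃ e : (Fin m → L) ≃ₗ[L] AdjoinRoot (X ^ m - C D),
      ∀ u v : Fin m → L,
        Algebra.trace L (AdjoinRoot (X ^ m - C D))
            ((m : AdjoinRoot (X ^ m - C D)) *
              algebraMap L (AdjoinRoot (X ^ m - C D)) a *
              AdjoinRoot.root (X ^ m - C D) * e u * e v) =
        ∑ i : Fin m, (if (i : ℕ) % 2 = 0 then (1 : L) else -1) * u i * v i := by
  classical
  obtain ⟨n, hn⟩ := heven
  have hn2 : m = 2 * n := by omega
  have hm0 : m ≠ 0 := by omega
  have h2m : (2 : L) * (m : L) ≠ 0 := by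
    have hcast : ((2 * m : ℕ) : L) = (2 : L) * (m : L) := by push_cast; ring
    rwa [hcast] at hchar
  have hmL : (m : L) ≠ 0 := fun h => h2m (by rw [h, mul_zero])
  have h2L : (2 : L) ≠ 0 := fun h => h2m (by rw [h, zero_mul])
  set c : L := (m : L) ^ 2 * a * D with hc_def
  have hc : c ≠ 0 := mul_ne_zero (mul_ne_zero (pow_ne_zero _ hmL) ha) hD
  set f : L[X] := X ^ m - C D with hf
  have hmonic : f.Monic := monic_X_pow_sub_C D hm0
  have hne : f ≠ 0 := hmonic.ne_zero
  have hdeg : f.natDegree = m := natDegree_X_pow_sub_C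
  set ρ := AdjoinRoot.root f with hρ
  have hroot : ρ ^ m = algebraMap L (AdjoinRoot f) D := by
    have h0 : AdjoinRoot.mk f f = 0 := AdjoinRoot.mk_self
    rw [hf] at h0
    rw [map_sub, map_pow, AdjoinRoot.mk_X, AdjoinRoot.mk_C, sub_eq_zero] at h0
    rw [hρ, h0, AdjoinRoot.algebraMap_eq]
  let pb := AdjoinRoot.powerBasis hne
  have hdim : pb.dim = m := by rw [AdjoinRoot.powerBasis_dim, hdeg]
  let b : Module.Basis (Fin m) L (AdjoinRoot f) := pb.basis.reindex (finCongr hdim)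
  have hb : ∀ i : Fin m, b i = ρ ^ (i : ℕ) := by
    intro i
    rw [show b i = pb.basis (finCongr hdim |>.symm i) from Module.Basis.reindex_apply _ _ i,
      PowerBasis.basis_eq_pow]
    simp [pb, AdjoinRoot.powerBasis_gen, hρ]
  have trE : ∀ t : ℕ, t < m → Algebra.trace L (AdjoinRoot f) (ρ ^ t) =
      if t = 0 then (m : L) else 0 := fun t ht => trace_root_pow hm0 D t ht
  have key : ∀ i j : ℕ, i < m → j < m →
      Algebra.trace L (AdjoinRoot f) ((m : AdjoinRoot f) * algebraMap L (AdjoinRoot f) a * ρ *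
        ρ ^ i * ρ ^ j) = if i + j + 1 = m then c else 0 := by
    intro i j hi hj
    have h1 : (m : AdjoinRoot f) * algebraMap L (AdjoinRoot f) a * ρ * ρ ^ i * ρ ^ j =
        ((m : L) * a) • ρ ^ (i + j + 1) := by
      rw [Algebra.smul_def, map_mul, map_natCast]
      ring
    rw [h1, map_smul, smul_eq_mul]
    by_cases hlt : i + j + 1 < m
    · rw [trE _ hlt, if_neg (by omega), if_neg (by omega), mul_zero]
    · have hs : i + j + 1 = m + (i + j + 1 - m) := by omega
      have hs2 : i + j + 1 - m < m := by omega
      rw [hs, pow_add, hroot, ← Algebra.smul_def, map_smul, smul_eq_mul, trE _ hs2]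
      by_cases h0 : i + j + 1 - m = 0
      · rw [if_pos h0, if_pos (by omega), hc_def]; ring
      · rw [if_neg h0, if_neg (by omega), mul_zero, mul_zero]
  -- the coordinate change
  let ext : (Fin m → L) → ℕ → L := fun u i => if h : i < m then u ⟨i, h⟩ else 0
  have ext_apply : ∀ (u : Fin m → L) (i : Fin m), ext u (i : ℕ) = u i := by
    intro u i; simp [ext, i.isLt]
  have ext_add : ∀ (u v : Fin m → L) i, ext (u + v) i = ext u i + ext v i := by
    intro u v i; simp only [ext]; split <;> simp
  have ext_smul : ∀ (r : L) (u : Fin m → L) i, ext (r • u) i = r * ext u i := by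
    intro r u i; simp only [ext]; split <;> simp
  let gf : (Fin m → L) → ℕ → L := fun u i =>
    if 2 * i < m then (2 * c)⁻¹ * (ext u (2 * i) + ext u (2 * i + 1))
    else if i < m then ext u (2 * (m - 1 - i)) - ext u (2 * (m - 1 - i) + 1) else 0
  let sf : (Fin m → L) → ℕ → L := fun w i =>
    if i % 2 = 0 then c * ext w (i / 2) + ext w (m - 1 - i / 2) / 2
    else c * ext w (i / 2) - ext w (m - 1 - i / 2) / 2
  have gf_lo : ∀ (u : Fin m → L) k, 2 * k + 1 < m →
      gf u k = (2 * c)⁻¹ * (ext u (2 * k) + ext u (2 * k + 1)) := by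
    intro u k h; simp only [gf]; rw [if_pos (by omega)]
  have gf_hi : ∀ (u : Fin m → L) k, m ≤ 2 * k → k < m →
      gf u k = ext u (2 * (m - 1 - k)) - ext u (2 * (m - 1 - k) + 1) := by
    intro u k h1 h2; simp only [gf]; rw [if_neg (by omega), if_pos h2]
  have sf_even : ∀ (w : Fin m → L) k, k % 2 = 0 →
      sf w k = c * ext w (k / 2) + ext w (m - 1 - k / 2) / 2 := by
    intro w k h; simp only [sf]; rw [if_pos h]
  have sf_odd : ∀ (w : Fin m → L) k, k % 2 = 1 →
      sf w k = c * ext w (k / 2) - ext w (m - 1 - k / 2) / 2 := by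
    intro w k h; simp only [sf]; rw [if_neg (by omega)]
  have extT : ∀ (u : Fin m → L) k, k < m →
      ext (fun j : Fin m => gf u (j : ℕ)) k = gf u k := by
    intro u k hk; simp only [ext, dif_pos hk]
  have extS : ∀ (w : Fin m → L) k, k < m →
      ext (fun j : Fin m => sf w (j : ℕ)) k = sf w k := by
    intro w k hk; simp only [ext, dif_pos hk]
  let T : (Fin m → L) ≃ₗ[L] (Fin m → L) :=
    { toFun := fun u j => gf u (j : ℕ)
      invFun := fun w i => sf w (i : ℕ)
      map_add' := by
        intro u v; funext j; simp only [gf, ext_add, Pi.add_apply]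
        split_ifs <;> ring
      map_smul' := by
        intro r u; funext j
        simp only [gf, ext_smul, RingHom.id_apply, Pi.smul_apply, smul_eq_mul]
        split_ifs <;> ring
      left_inv := by
        intro u; funext i
        show sf (fun j : Fin m => gf u (j : ℕ)) (i : ℕ) = u i
        have hi : (i : ℕ) < m := i.isLt
        rcases Nat.even_or_odd (i : ℕ) with he | ho
        · have hpar : (i : ℕ) % 2 = 0 := Nat.even_iff.mp he
          rw [sf_even (fun j : Fin m => gf u (j : ℕ)) (i : ℕ) hpar, extT _ _ (by omega), extT _ _ (by omega),
            gf_lo u ((i : ℕ) / 2) (by omega), gf_hi u (m - 1 - (i : ℕ) / 2) (by omega) (by omega),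
            show m - 1 - (m - 1 - (i : ℕ) / 2) = (i : ℕ) / 2 from by omega,
            show 2 * ((i : ℕ) / 2) = (i : ℕ) from by omega, ext_apply]
          field_simp
          ring
        · have hpar : (i : ℕ) % 2 = 1 := Nat.odd_iff.mp ho
          rw [sf_odd (fun j : Fin m => gf u (j : ℕ)) (i : ℕ) hpar, extT _ _ (by omega), extT _ _ (by omega),
            gf_lo u ((i : ℕ) / 2) (by omega), gf_hi u (m - 1 - (i : ℕ) / 2) (by omega) (by omega),
            show m - 1 - (m - 1 - (i : ℕ) / 2) = (i : ℕ) / 2 from by omega,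
            show 2 * ((i : ℕ) / 2) + 1 = (i : ℕ) from by omega, ext_apply]
          field_simp
          ring
      right_inv := by
        intro w; funext j
        show gf (fun i : Fin m => sf w (i : ℕ)) (j : ℕ) = w j
        have hj : (j : ℕ) < m := j.isLt
        by_cases hcase : 2 * (j : ℕ) < m
        · rw [gf_lo (fun i : Fin m => sf w (i : ℕ)) (j : ℕ) (by omega), extS _ _ (by omega), extS _ _ (by omega),
            sf_even _ _ (by omega), sf_odd _ _ (by omega),
            show 2 * (j : ℕ) / 2 = (j : ℕ) from by omega,
            show (2 * (j : ℕ) + 1) / 2 = (j : ℕ) from by omega, ext_apply]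
          field_simp
          ring
        · rw [gf_hi (fun i : Fin m => sf w (i : ℕ)) (j : ℕ) (by omega) hj, extS _ _ (by omega), extS _ _ (by omega),
            sf_even _ _ (by omega), sf_odd _ _ (by omega),
            show 2 * (m - 1 - (j : ℕ)) / 2 = m - 1 - (j : ℕ) from by omega,
            show (2 * (m - 1 - (j : ℕ)) + 1) / 2 = m - 1 - (j : ℕ) from by omega,
            show m - 1 - (m - 1 - (j : ℕ)) = (j : ℕ) from by omega, ext_apply]
          field_simp
          ring }
  refine ⟨T.trans b.equivFun.symm, ?_⟩
  intro u v
  have heq : ∀ w : Fin m → L,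
      (T.trans b.equivFun.symm) w = ∑ i ∈ range m, gf w i • ρ ^ i := by
    intro w
    rw [LinearEquiv.trans_apply, Module.Basis.equivFun_symm_apply,
      ← Fin.sum_univ_eq_sum_range (fun i => gf w i • ρ ^ i) m]
    refine Finset.sum_congr rfl fun i _ => ?_
    rw [hb i]
    rfl
  rw [heq u, heq v]
  have expand : (m : AdjoinRoot f) * algebraMap L (AdjoinRoot f) a * ρ *
      (∑ i ∈ range m, gf u i • ρ ^ i) * (∑ j ∈ range m, gf v j • ρ ^ j) =
      ∑ i ∈ range m, ∑ j ∈ range m, (gf u i * gf v j) •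
        ((m : AdjoinRoot f) * algebraMap L (AdjoinRoot f) a * ρ * ρ ^ i * ρ ^ j) := by
    rw [mul_assoc, Finset.sum_mul_sum, Finset.mul_sum]
    refine Finset.sum_congr rfl fun i _ => ?_
    rw [Finset.mul_sum]
    refine Finset.sum_congr rfl fun j _ => ?_
    simp only [Algebra.smul_def, map_mul]
    ring
  rw [expand, map_sum]
  have step : ∀ i ∈ range m,
      Algebra.trace L (AdjoinRoot f) (∑ j ∈ range m, (gf u i * gf v j) •
        ((m : AdjoinRoot f) * algebraMap L (AdjoinRoot f) a * ρ * ρ ^ i * ρ ^ j)) =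
      gf u i * gf v (m - 1 - i) * c := by
    intro i hi
    rw [Finset.mem_range] at hi
    rw [map_sum]
    rw [Finset.sum_congr rfl fun j hj => by
      rw [map_smul, smul_eq_mul, key i j hi (Finset.mem_range.mp hj)]]
    rw [Finset.sum_eq_single (m - 1 - i)]
    · rw [if_pos (by omega)]
    · intro j hj hne'
      rw [if_neg (by omega), mul_zero]
    · intro habs
      exact absurd (Finset.mem_range.mpr (by omega)) habs
  rw [Finset.sum_congr rfl step]
  have hRHS : ∑ i : Fin m, (if (i : ℕ) % 2 = 0 then (1 : L) else -1) * u i * v i =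
      ∑ i ∈ range m, (if i % 2 = 0 then (1 : L) else -1) * ext u i * ext v i := by
    rw [← Fin.sum_univ_eq_sum_range
      (fun i => (if i % 2 = 0 then (1 : L) else -1) * ext u i * ext v i) m]
    exact Finset.sum_congr rfl fun i _ => by rw [ext_apply, ext_apply]
  rw [hRHS]
  have splitL : ∀ P : ℕ → L, ∑ i ∈ range m, P i = ∑ k ∈ range n, (P k + P (m - 1 - k)) := by
    intro P; rw [hn2]; exact sum_range_even_split P n
  have splitR : ∀ P : ℕ → L, ∑ i ∈ range m, P i =
      ∑ k ∈ range n, (P (2 * k) + P (2 * k + 1)) := by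
    intro P; rw [hn2]; exact sum_range_pair P n
  rw [splitL (fun i => gf u i * gf v (m - 1 - i) * c),
    splitR (fun i => (if i % 2 = 0 then (1 : L) else -1) * ext u i * ext v i)]
  refine Finset.sum_congr rfl fun k hk => ?_
  rw [Finset.mem_range] at hk
  rw [show m - 1 - (m - 1 - k) = k from by omega,
    gf_lo u k (by omega), gf_hi v (m - 1 - k) (by omega) (by omega),
    gf_hi u (m - 1 - k) (by omega) (by omega), gf_lo v k (by omega),
    show m - 1 - (m - 1 - k) = k from by omega,
    if_pos (by omega : 2 * k % 2 = 0), if_neg (by omega : ¬ (2 * k + 1) % 2 = 0)]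
  field_simp
  ring
end

section
/- Let k be a field, let z₁, z₂ ∈ kˣ, let I = (i₁,i₂), I′ = (i₁′,i₂′), J = (j₁,j₂), J′ = (j₁′,j₂′) ∈ ℤ², and let α_I, α_{I′}, β_J, β_{J′} ∈ kˣ satisfy α_I z^I + α_{I′} z^{I′} = 0 and β_J z^J + β_{J′} z^{J′} = 0. Then the determinant of the 2×2 matrix with first row (i₁α_I z^{I−e₁} + i₁′α_{I′} z^{I′−e₁}, i₂α_I z^{I−e₂} + i₂′α_{I′} z^{I′−e₂}) and second row (j₁β_J z^{J−e₁} + j₁′β_{J′} z^{J′−e₁}, j₂β_J z^{J−e₂} + j₂′β_{J′} z^{J′−e₂}) equals ((i₁−i₁′)(j₂−j₂′) − (i₂−i₂′)(j₁−j₁′)) · α_I β_J · z^{I+J−(1,1)}. -/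
/-- For `z = (z₁, z₂)` with `z₁, z₂ ∈ kˣ` and `V ∈ ℤ²`, the monomial `z^V = z₁^{V₁} z₂^{V₂}`
regarded as an element of `k`. -/
def zmon {k : Type*} [Field k] (z₁ z₂ : kˣ) (V : ℤ × ℤ) : k :=
  ((z₁ ^ V.1 * z₂ ^ V.2 : kˣ) : k)

lemma zmon_eq {k : Type*} [Field k] (z₁ z₂ : kˣ) (V : ℤ × ℤ) :
    zmon z₁ z₂ V = (z₁ : k) ^ V.1 * (z₂ : k) ^ V.2 := by
  simp [zmon]

lemma zmon_sub {k : Type*} [Field k] (z₁ z₂ : kˣ) (V W : ℤ × ℤ) :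
    zmon z₁ z₂ (V - W) = zmon z₁ z₂ V / ((z₁ : k) ^ W.1 * (z₂ : k) ^ W.2) := by
  simp only [zmon_eq, Prod.fst_sub, Prod.snd_sub, zpow_sub₀ z₁.ne_zero, zpow_sub₀ z₂.ne_zero]
  field_simp

/-- The determinant of the Jacobian matrix of the two local binomial equations
`α_I x^I + α_{I′} x^{I′}` and `β_J x^J + β_{J′} x^{J′}` at a common zero `(z₁, z₂)` equals
`((i₁−i₁′)(j₂−j₂′) − (i₂−i₂′)(j₁−j₁′)) · α_I β_J · z^{I+J−(1,1)}`. -/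
theorem jacobian_det_binomials (k : Type*) [Field k] (z₁ z₂ : kˣ) (I I' J J' : ℤ × ℤ)
    (αI αI' βJ βJ' : kˣ)
    (h₁ : (αI : k) * zmon z₁ z₂ I + (αI' : k) * zmon z₁ z₂ I' = 0)
    (h₂ : (βJ : k) * zmon z₁ z₂ J + (βJ' : k) * zmon z₁ z₂ J' = 0) :
    Matrix.det
      !![(I.1 : k) * (αI : k) * zmon z₁ z₂ (I - (1, 0)) +
            (I'.1 : k) * (αI' : k) * zmon z₁ z₂ (I' - (1, 0)),
          (I.2 : k) * (αI : k) * zmon z₁ z₂ (I - (0, 1)) +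
            (I'.2 : k) * (αI' : k) * zmon z₁ z₂ (I' - (0, 1));
          (J.1 : k) * (βJ : k) * zmon z₁ z₂ (J - (1, 0)) +
            (J'.1 : k) * (βJ' : k) * zmon z₁ z₂ (J' - (1, 0)),
          (J.2 : k) * (βJ : k) * zmon z₁ z₂ (J - (0, 1)) +
            (J'.2 : k) * (βJ' : k) * zmon z₁ z₂ (J' - (0, 1))] =
    (((I.1 - I'.1) * (J.2 - J'.2) - (I.2 - I'.2) * (J.1 - J'.1) : ℤ) : k) *
      (αI : k) * (βJ : k) * zmon z₁ z₂ (I + J - (1, 1)) := by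
  have hb : zmon z₁ z₂ I' = -((αI : k) * zmon z₁ z₂ I) / (αI' : k) := by
    field_simp
    linear_combination h₁
  have hd : zmon z₁ z₂ J' = -((βJ : k) * zmon z₁ z₂ J) / (βJ' : k) := by
    field_simp
    linear_combination h₂
  have hIJ : (I + J - ((1 : ℤ), (1 : ℤ))) = (I + J) - (1, 1) := rfl
  rw [Matrix.det_fin_two_of, zmon_sub, zmon_sub, zmon_sub, zmon_sub, zmon_sub, zmon_sub,
    zmon_sub, zmon_sub, hIJ, zmon_sub, hb, hd]
  have hadd : zmon z₁ z₂ (I + J) = zmon z₁ z₂ I * zmon z₁ z₂ J := by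
    simp only [zmon_eq, Prod.fst_add, Prod.snd_add,
      zpow_add₀ (z₁.ne_zero), zpow_add₀ (z₂.ne_zero)]
    ring
  rw [hadd]
  have h1 : (z₁ : k) ≠ 0 := z₁.ne_zero
  have h2 : (z₂ : k) ≠ 0 := z₂.ne_zero
  have ha : (αI' : k) ≠ 0 := αI'.ne_zero
  have hc : (βJ' : k) ≠ 0 := βJ'.ne_zero
  push_cast
  field_simp
  ring
end

section
/- Let k be a field and n ≥ 1. Let z₁, …, z_n ∈ kˣ, and for each i ∈ {1, …, n} let I^i, J^i ∈ ℤⁿ and α_i, β_i ∈ kˣ satisfy α_i·z^{I^i} + β_i·z^{J^i} = 0. Then the determinant of the n×n matrix M with entries M_{ij} = I^i_j·α_i·z^{I^i − e_j} + J^i_j·β_i·z^{J^i − e_j} equals det((I^i_j − J^i_j)_{i,j}) · (∏_{i=1}^n α_i) · z^{Σ_{i=1}^n I^i − e}, where e = (1, …, 1) ∈ ℤⁿ. -/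
/-- For `z = (z₁,…,z_n)` with `z_i ∈ kˣ` and `V ∈ ℤⁿ`, the monomial `z^V = ∏ⱼ zⱼ^{Vⱼ}`
regarded as an element of `k`. -/
def zmonN {k : Type*} [Field k] {n : ℕ} (z : Fin n → kˣ) (V : Fin n → ℤ) : k :=
  ((∏ j, z j ^ V j : kˣ) : k)

lemma zpow_finset_sum {G : Type*} [CommGroup G] (a : G) {ι : Type*} (s : Finset ι)
    (f : ι → ℤ) : a ^ (∑ i ∈ s, f i) = ∏ i ∈ s, a ^ f i := by
  classical
  induction s using Finset.induction with
  | empty => simp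
  | insert _ _ hi ih => simp [Finset.sum_insert hi, Finset.prod_insert hi, zpow_add, ih]

lemma zmonN_sub_single {k : Type*} [Field k] {n : ℕ} (z : Fin n → kˣ) (V : Fin n → ℤ)
    (j : Fin n) : zmonN z (V - Pi.single j 1) = zmonN z V * ((z j : k))⁻¹ := by
  unfold zmonN
  rw [← Units.val_inv_eq_inv_val, ← Units.val_mul]
  congr 1
  have h1 : ∀ j' ∈ (Finset.univ : Finset (Fin n)),
      z j' ^ ((V - Pi.single j 1 : Fin n → ℤ) j') =
      z j' ^ V j' * (z j' ^ ((Pi.single j 1 : Fin n → ℤ) j'))⁻¹ := fun j' _ => by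
    rw [Pi.sub_apply, zpow_sub]
  rw [Finset.prod_congr rfl h1, Finset.prod_mul_distrib, Finset.prod_inv_distrib]
  congr 1
  congr 1
  rw [Finset.prod_eq_single j (fun b _ hb => by simp [Pi.single_apply, hb]) (by simp)]
  simp

lemma zmonN_sum {k : Type*} [Field k] {n : ℕ} (z : Fin n → kˣ) (I : Fin n → Fin n → ℤ) :
    zmonN z (∑ i, I i) = ∏ i, zmonN z (I i) := by
  unfold zmonN
  rw [← Units.coe_prod]
  congr 1
  rw [Finset.prod_comm]
  exact Finset.prod_congr rfl fun j _ => by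
    simp only [Finset.sum_apply]; exact zpow_finset_sum _ _ _

/-- The determinant of the Jacobian matrix of the local binomial equations
`fᵢ′ = αᵢ x^{Iⁱ} + βᵢ x^{Jⁱ}` at a common zero `z` (with all coordinates units) equals
`det((Iⁱⱼ − Jⁱⱼ)) · (∏ᵢ αᵢ) · z^{Σᵢ Iⁱ − e}` where `e = (1,…,1)`. -/
theorem jacobian_det_binomials_dim_n (k : Type*) [Field k] (n : ℕ) (hn : 1 ≤ n)
    (z : Fin n → kˣ) (I J : Fin n → Fin n → ℤ) (α β : Fin n → kˣ)
    (h : ∀ i, (α i : k) * zmonN z (I i) + (β i : k) * zmonN z (J i) = 0) :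
    (Matrix.of fun i j : Fin n =>
        (I i j : k) * (α i : k) * zmonN z (I i - Pi.single j 1) +
        (J i j : k) * (β i : k) * zmonN z (J i - Pi.single j 1)).det =
    (((Matrix.of fun i j : Fin n => I i j - J i j).det : ℤ) : k) *
      (∏ i, (α i : k)) * zmonN z ((∑ i, I i) - 1) := by
  classical
  have hb : ∀ i, (β i : k) * zmonN z (J i) = -((α i : k) * zmonN z (I i)) := by
    intro i; linear_combination h i
  have hM : (Matrix.of fun i j : Fin n =>
        (I i j : k) * (α i : k) * zmonN z (I i - Pi.single j 1) +
        (J i j : k) * (β i : k) * zmonN z (J i - Pi.single j 1)) =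
      Matrix.diagonal (fun i => (α i : k) * zmonN z (I i)) *
        (Matrix.of fun i j : Fin n => ((I i j - J i j : ℤ) : k)) *
        Matrix.diagonal (fun j => ((z j : k))⁻¹) := by
    ext i j
    rw [Matrix.mul_diagonal, Matrix.diagonal_mul]
    simp only [Matrix.of_apply]
    rw [zmonN_sub_single, zmonN_sub_single]
    push_cast
    linear_combination ((J i j : k) * ((z j : k))⁻¹) * h i
  rw [hM, Matrix.det_mul, Matrix.det_mul, Matrix.det_diagonal, Matrix.det_diagonal]
  have hdet : (Matrix.of fun i j : Fin n => ((I i j - J i j : ℤ) : k)).det =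
      (((Matrix.of fun i j : Fin n => I i j - J i j).det : ℤ) : k) := by
    rw [show (((Matrix.of fun i j : Fin n => I i j - J i j).det : ℤ) : k) =
        (Int.castRingHom k) (Matrix.of fun i j : Fin n => I i j - J i j).det from rfl,
      RingHom.map_det]
    congr 1
  rw [hdet]
  have hz : zmonN z ((∑ i, I i) - 1) = zmonN z (∑ i, I i) * ∏ j, ((z j : k))⁻¹ := by
    unfold zmonN
    simp only [← Units.val_inv_eq_inv_val]
    rw [← Units.coe_prod (fun j => (z j)⁻¹), ← Units.val_mul]
    · congr 1
      rw [← Finset.prod_mul_distrib]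
      exact Finset.prod_congr rfl fun j _ => by
        rw [Pi.sub_apply, zpow_sub]
        simp [div_eq_mul_inv]
  rw [hz, zmonN_sum, Finset.prod_mul_distrib]
  ring
end

section
/- Let k be a field, n ≥ 1, z₁, …, z_n ∈ kˣ, and for each i let I^i, J^i ∈ ℤⁿ and α_i, β_i ∈ kˣ satisfy α_i·z^{I^i} + β_i·z^{J^i} = 0. Fix j₀ ∈ {1, …, n} and define I′^i = I^i, J′^i = J^i, α′_i = α_i, β′_i = β_i for i ≠ j₀, and I′^{j₀} = J^{j₀}, J′^{j₀} = I^{j₀}, α′_{j₀} = β_{j₀}, β′_{j₀} = α_{j₀}. Then det((I′^i_j − J′^i_j)_{i,j}) · (∏_i α′_i) · z^{Σ_i I′^i − e} = det((I^i_j − J^i_j)_{i,j}) · (∏_i α_i) · z^{Σ_i I^i − e}; i.e., the quantity det(Δ^i)·∏α_i·z^{ΣI^i−e} is invariant under exchanging the roles of I^{j₀} and J^{j₀} (together with α_{j₀} and β_{j₀}). -/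
lemma zmonN_add {k : Type*} [Field k] {n : ℕ} (z : Fin n → kˣ) (V W : Fin n → ℤ) :
    zmonN z (V + W) = zmonN z V * zmonN z W := by
  simp [zmonN, zpow_add, Finset.prod_mul_distrib]

/-- The quantity `det(Δⁱ)·∏αᵢ·z^{ΣIⁱ−e}` is invariant under exchanging the roles of
`I^{j₀}` and `J^{j₀}` (together with `α_{j₀}` and `β_{j₀}`). -/
theorem jacobian_det_swap_invariant_dim_n (k : Type*) [Field k] (n : ℕ) (hn : 1 ≤ n)
    (z : Fin n → kˣ) (I J : Fin n → Fin n → ℤ) (α β : Fin n → kˣ)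
    (h : ∀ i, (α i : k) * zmonN z (I i) + (β i : k) * zmonN z (J i) = 0)
    (j₀ : Fin n) :
    (((Matrix.of fun i j : Fin n =>
          (Function.update I j₀ (J j₀)) i j - (Function.update J j₀ (I j₀)) i j).det : ℤ) : k) *
        (∏ i, ((Function.update α j₀ (β j₀)) i : k)) *
        zmonN z ((∑ i, Function.update I j₀ (J j₀) i) - 1) =
    (((Matrix.of fun i j : Fin n => I i j - J i j).det : ℤ) : k) *
        (∏ i, (α i : k)) * zmonN z ((∑ i, I i) - 1) := by
  classical
  set M : Matrix (Fin n) (Fin n) ℤ := Matrix.of fun i j => I i j - J i j with hM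
  -- determinant changes sign
  have hMdet : (Matrix.of fun i j : Fin n =>
      (Function.update I j₀ (J j₀)) i j - (Function.update J j₀ (I j₀)) i j).det = - M.det := by
    have hrow : (Matrix.of fun i j : Fin n =>
        (Function.update I j₀ (J j₀)) i j - (Function.update J j₀ (I j₀)) i j)
        = M.updateRow j₀ ((-1 : ℤ) • (M j₀)) := by
      ext i j
      rcases eq_or_ne i j₀ with rfl | hi
      · simp [Matrix.updateRow_apply, hM]
      · simp [Matrix.updateRow_apply, hi, Function.update_of_ne hi, hM]
    rw [hrow, Matrix.det_updateRow_smul, Matrix.updateRow_eq_self]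
    ring
  -- sums
  have hsum : (∑ i, Function.update I j₀ (J j₀) i)
      = J j₀ + ∑ i ∈ Finset.univ \ {j₀}, I i :=
    Finset.sum_update_of_mem (Finset.mem_univ j₀) _ _
  have hsum' : (∑ i, I i) = I j₀ + ∑ i ∈ Finset.univ \ {j₀}, I i := by
    rw [Finset.sum_eq_sum_sdiff_singleton_add (Finset.mem_univ j₀)]
    ring
  -- products
  have hcoe : (fun i => ((Function.update α j₀ (β j₀)) i : k))
      = Function.update (fun i => (α i : k)) j₀ ((β j₀ : k)) := by
    funext i
    exact Function.apply_update (fun _ (u : kˣ) => (u : k)) α j₀ (β j₀) i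
  have hprod : (∏ i, ((Function.update α j₀ (β j₀)) i : k))
      = (β j₀ : k) * ∏ i ∈ Finset.univ \ {j₀}, (α i : k) := by
    rw [show (∏ i, ((Function.update α j₀ (β j₀)) i : k))
        = ∏ i, (Function.update (fun i => (α i : k)) j₀ ((β j₀ : k))) i by rw [← hcoe]]
    exact Finset.prod_update_of_mem (Finset.mem_univ j₀) _ _
  have hprod' : (∏ i, (α i : k)) = (α j₀ : k) * ∏ i ∈ Finset.univ \ {j₀}, (α i : k) := by
    rw [Finset.prod_eq_prod_diff_singleton_mul (Finset.mem_univ j₀)]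
    ring
  set T : Fin n → ℤ := ∑ i ∈ Finset.univ \ {j₀}, I i with hT
  have key : (β j₀ : k) * zmonN z (J j₀) = -((α j₀ : k) * zmonN z (I j₀)) := by
    linear_combination h j₀
  rw [hMdet, hsum, hsum', hprod, hprod']
  have e1 : J j₀ + T - 1 = J j₀ + (T - 1) := by ring
  have e2 : I j₀ + T - 1 = I j₀ + (T - 1) := by ring
  rw [e1, e2, zmonN_add, zmonN_add]
  push_cast
  linear_combination (-((M.map fun x => (x : k)).det) * (∏ i ∈ Finset.univ \ {j₀}, (α i : k))
    * zmonN z (T - 1)) * key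
end
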